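/- arXiv:2307.11059 — 3 statements merged into one kernel-verified Lean document; each statement's English description precedes it below -/
import Mathlib

section
/- Let D be a dense countably infinite mesh in I^n and fix an integer k with 1 ≤ k ≤ n. Let A, C : D → I be functions with A ≤ C, L_k^{(A,C)}(DU) ≥ 0 for all DU ∈ R_k(D), and δ_{k,D}^{(A,C)}(d) = 0 for all d ∈ D. Assume A(v) = C(v) for all vertices v of the unit cube I^n, and that there exists a k-box Q with vertices in D such that V_{C,k}(Q) = v < 0, with vertices x_1,…,x_s (s ∈ {1,…,2^{k−1}}) satisfying m_Q(x_i) = −1 and A(x_i) < C(x_i) for all i ∈ {1,…,s}, while A(x) = C(x) for every other vertex x of Q with m_Q(x) = −1. Assume further that for each i ∈ {1,…,s} we are given DU_i ∈ R_k(D) with m_{DU_i}(x_i) > 0 and L_k^{(A,C)}(DU_i) < |m_{DU_i}(x_i)|·|v|/s. Set m = ∏_{l=1}^s |m_{DU_l}(x_l)| and m_i = m/|m_{DU_i}(x_i)|, and define the multisets Ř (m copies of Q together with m_l copies of every box of DU_l for each l ∈ {1,…,s}) and, for each i ∈ {1,…,s}, Ř_i (m copies of Q together with m_l copies of every box of DU_l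 for each l ∈ {1,…,s}\{i}). Then: (i) for each i ∈ {1,…,s}, L_k^{(A,C)}(Ř_i) ≤ m·(C(x_i) − A(x_i)) + m·V_{C,k}(Q) + Σ_{l∈{1,…,s}\{i}} m_l·L_k^{(A,C)}(DU_l); (ii) L_k^{(A,C)}(Ř) ≤ m·V_{C,k}(Q) + Σ_{l=1}^s m_l·L_k^{(A,C)}(DU_l). -/
open scoped Classical BigOperators

namespace KIncr

/-- Points of the ambient space `ℝ^n`. -/
abbrev Pt (n : ℕ) := Fin n → ℝ

/-- Membership in the unit cube `I^n = [0,1]^n`. -/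
def inCube {n : ℕ} (x : Pt n) : Prop := ∀ i, x i ∈ Set.Icc (0:ℝ) 1

/-- The unit cube as a set. -/
def cubeSet (n : ℕ) : Set (Pt n) := {x | inCube x}

/-- Vertices of the unit cube `I^n`. -/
def isCubeVertex {n : ℕ} (x : Pt n) : Prop := ∀ i, x i = 0 ∨ x i = 1

/-- A (formal) box, given by its lower-left and upper-right corners. -/
structure Box (n : ℕ) where
  lo : Pt n
  hi : Pt n

/-- `R` is a `k`-box in `I^n`: exactly `k` coordinates are nondegenerate. -/
def Box.IsKBox {n : ℕ} (k : ℕ) (R : Box n) : Prop :=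
  inCube R.lo ∧ inCube R.hi ∧ (∀ i, R.lo i ≤ R.hi i) ∧
    (Finset.univ.filter (fun i => R.lo i < R.hi i)).card = k

/-- `v` is a vertex of the box `R`. -/
def Box.IsVertex {n : ℕ} (R : Box n) (v : Pt n) : Prop :=
  ∀ i, v i = R.lo i ∨ v i = R.hi i

/-- The (finite) set of vertices of a box. -/
noncomputable def Box.vertices {n : ℕ} (R : Box n) : Finset (Pt n) :=
  Finset.image (fun ε : Fin n → Bool => fun i => if ε i then R.hi i else R.lo i)
    Finset.univ

/-- The sign `(-1)^(m-(n-k))` of a vertex `v` of a `k`-box, where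
`m = #{i : v i = lo i}`;  since `m ≥ n - k`, this equals `(-1)^(m+(n-k))`. -/
noncomputable def Box.sign {n : ℕ} (k : ℕ) (R : Box n) (v : Pt n) : ℤ :=
  (-1) ^ ((Finset.univ.filter (fun i => v i = R.lo i)).card + (n - k))

/-- The multiplicity `m_R(u)` of a point `u` with respect to a `k`-box `R`. -/
noncomputable def Box.mult {n : ℕ} (k : ℕ) (R : Box n) (u : Pt n) : ℤ :=
  if R.IsVertex u then R.sign k u else 0

/-- `V_{A,k}(R) = ∑_{v ∈ ver R} sign_R(v) · A(v)`. -/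
noncomputable def Vvol {n : ℕ} (k : ℕ) (A : Pt n → ℝ) (R : Box n) : ℝ :=
  ∑ v ∈ R.vertices, (R.sign k v : ℝ) * A v

/-- A function is `k`-increasing on `D` if `V_{A,k}(R) ≥ 0` for every `k`-box
with all vertices in `D`. -/
def KIncreasingOn {n : ℕ} (k : ℕ) (D : Set (Pt n)) (A : Pt n → ℝ) : Prop :=
  ∀ R : Box n, R.IsKBox k → (∀ v ∈ R.vertices, v ∈ D) → 0 ≤ Vvol k A R

/-- The multiplicity `m_DU(u)` of a point with respect to a formal (multiset)
disjoint union of `k`-boxes. -/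
noncomputable def multDU {n : ℕ} (k : ℕ) (DU : Multiset (Box n)) (u : Pt n) : ℤ :=
  (DU.map (fun R => R.mult k u)).sum

/-- `DU ∈ R_k(D)`: every box of the multiset `DU` is a `k`-box with all its
vertices in `D`. -/
def memRk {n : ℕ} (k : ℕ) (D : Set (Pt n)) (DU : Multiset (Box n)) : Prop :=
  ∀ R ∈ DU, R.IsKBox k ∧ ∀ v ∈ R.vertices, v ∈ D

/-- `L_k^{(A,B)}(DU) = ∑_{m_DU(u)>0} m_DU(u)·B(u) + ∑_{m_DU(u)<0} m_DU(u)·A(u)`. -/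
noncomputable def Lk {n : ℕ} (k : ℕ) (A B : Pt n → ℝ) (DU : Multiset (Box n)) : ℝ :=
  ∑ u ∈ DU.toFinset.biUnion Box.vertices,
    (if 0 < multDU k DU u then (multDU k DU u : ℝ) * B u
     else if multDU k DU u < 0 then (multDU k DU u : ℝ) * A u else 0)

/-- `P⁻_{k,D}^{(A,B)}(x)`, with the Mathlib convention `sInf ∅ = 0`. -/
noncomputable def Pneg {n : ℕ} (k : ℕ) (D : Set (Pt n)) (A B : Pt n → ℝ) (x : Pt n) : ℝ :=
  sInf {r : ℝ | ∃ DU : Multiset (Box n), memRk k D DU ∧ multDU k DU x < 0 ∧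
    r = Lk k A B DU / |(multDU k DU x : ℝ)|}

/-- `P⁺_{k,D}^{(A,B)}(x)`, with the Mathlib convention `sInf ∅ = 0`. -/
noncomputable def Ppos {n : ℕ} (k : ℕ) (D : Set (Pt n)) (A B : Pt n → ℝ) (x : Pt n) : ℝ :=
  sInf {r : ℝ | ∃ DU : Multiset (Box n), memRk k D DU ∧ 0 < multDU k DU x ∧
    r = Lk k A B DU / |(multDU k DU x : ℝ)|}

/-- `γ_{k,D}^{(A,B)}(x) = min {P⁻_{k,D}^{(A,B)}(x), B(x) - A(x)}`. -/
noncomputable def gammaK {n : ℕ} (k : ℕ) (D : Set (Pt n)) (A B : Pt n → ℝ) (x : Pt n) : ℝ :=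
  min (Pneg k D A B x) (B x - A x)

/-- `δ_{k,D}^{(A,B)}(x) = min {P⁺_{k,D}^{(A,B)}(x), B(x) - A(x)}`. -/
noncomputable def deltaK {n : ℕ} (k : ℕ) (D : Set (Pt n)) (A B : Pt n → ℝ) (x : Pt n) : ℝ :=
  min (Ppos k D A B x) (B x - A x)

/-- A dense countably infinite mesh `D = ∏ δᵢ` in `I^n`. -/
def IsMesh {n : ℕ} (D : Set (Pt n)) : Prop :=
  ∃ δ : Fin n → Set ℝ,
    (∀ i, δ i ⊆ Set.Icc (0:ℝ) 1 ∧ (δ i).Countable ∧ (δ i).Infinite ∧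
      Set.Icc (0:ℝ) 1 ⊆ closure (δ i) ∧ (0:ℝ) ∈ δ i ∧ (1:ℝ) ∈ δ i) ∧
    D = {x : Pt n | ∀ i, x i ∈ δ i}

/-- `A` is grounded: it vanishes whenever some coordinate is `0`. -/
def Grounded {n : ℕ} (A : Pt n → ℝ) : Prop :=
  ∀ x : Pt n, inCube x → (∃ i, x i = 0) → A x = 0

/-- `A` is 1-increasing (increasing in each variable). -/
def OneIncreasing {n : ℕ} (A : Pt n → ℝ) : Prop :=
  ∀ x y : Pt n, inCube x → inCube y → (∀ i, x i ≤ y i) → A x ≤ A y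

/-- `A` has uniform marginals. -/
def UniformMarginals {n : ℕ} (A : Pt n → ℝ) : Prop :=
  ∀ i : Fin n, ∀ t ∈ Set.Icc (0:ℝ) 1, A (Function.update (fun _ => (1:ℝ)) i t) = t

/-- `A` is a standardized function. -/
def Standardized {n : ℕ} (A : Pt n → ℝ) : Prop :=
  Grounded A ∧ OneIncreasing A ∧ A (fun _ => (1:ℝ)) = 1

/-- `A` is a semicopula. -/
def Semicopula {n : ℕ} (A : Pt n → ℝ) : Prop :=
  Grounded A ∧ OneIncreasing A ∧ UniformMarginals A

/-- `A` maps the unit cube into `I = [0,1]`. -/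
def MapsToI {n : ℕ} (A : Pt n → ℝ) : Prop :=
  ∀ x : Pt n, inCube x → A x ∈ Set.Icc (0:ℝ) 1

/-- Condition S: all discontinuities of all sections of `A` lie in the
countable set `S`. -/
def CondS {n : ℕ} (A : Pt n → ℝ) (S : Set ℝ) : Prop :=
  ∀ u : Pt n, inCube u → ∀ i : Fin n, ∀ t ∈ Set.Icc (0:ℝ) 1, t ∉ S →
    ContinuousWithinAt (fun s => A (Function.update u i s)) (Set.Icc (0:ℝ) 1) t

/-- A quasi-copula: a semicopula that is 1-Lipschitz w.r.t. the ℓ¹-norm. -/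
def QuasiCopula {n : ℕ} (A : Pt n → ℝ) : Prop :=
  Semicopula A ∧ ∀ x y : Pt n, inCube x → inCube y → |A x - A y| ≤ ∑ i, |x i - y i|

end KIncr

open KIncr
namespace StmtAux

variable {n : ℕ}

lemma mem_vertices_iff (R : Box n) (u : Pt n) : u ∈ R.vertices ↔ R.IsVertex u := by
  constructor
  · intro hu
    rcases Finset.mem_image.mp hu with ⟨ε, -, rfl⟩
    intro i
    by_cases h : ε i <;> simp [h]
  · intro h
    refine Finset.mem_image.mpr ⟨fun i => decide (u i = R.hi i), Finset.mem_univ _, ?_⟩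
    funext i
    by_cases h' : u i = R.hi i
    · simp [h']
    · rcases h i with h2 | h2
      · have : (if (decide (u i = R.hi i)) = true then R.hi i else R.lo i) = u i := by
          rw [decide_eq_false h']
          simpa using h2.symm
        exact this
      · exact absurd h2 h'

lemma mult_eq_zero (R : Box n) {k : ℕ} {u : Pt n} (hu : u ∉ R.vertices) :
    R.mult k u = 0 := by
  rw [Box.mult, if_neg]
  exact fun h => hu ((mem_vertices_iff R u).mpr h)

lemma mult_eq_sign (R : Box n) {k : ℕ} {u : Pt n} (hu : u ∈ R.vertices) :
    R.mult k u = R.sign k u := by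
  rw [Box.mult, if_pos ((mem_vertices_iff R u).mp hu)]

lemma mult_mem (R : Box n) (k : ℕ) (u : Pt n) :
    R.mult k u = 0 ∨ R.mult k u = 1 ∨ R.mult k u = -1 := by
  rw [Box.mult]
  split
  · rcases Nat.even_or_odd ((Finset.univ.filter (fun i => u i = R.lo i)).card + (n - k)) with h | h
    · right; left; rw [Box.sign]; exact h.neg_one_pow
    · right; right; rw [Box.sign]; exact h.neg_one_pow
  · left; rfl

/-- The per-point contribution function. -/
noncomputable def F (A C : Pt n → ℝ) (m : ℤ) (u : Pt n) : ℝ :=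
  if 0 < m then (m:ℝ) * C u else if m < 0 then (m:ℝ) * A u else 0

lemma F_zero (A C : Pt n → ℝ) (u : Pt n) : F A C 0 u = 0 := by simp [F]

lemma F_eq (A C : Pt n → ℝ) (m : ℤ) (u : Pt n) :
    F A C m u = (m:ℝ) * C u + (max 0 (-m) : ℤ) * (C u - A u) := by
  rcases lt_trichotomy m 0 with h | h | h
  · rw [F, if_neg (by omega), if_pos h]
    rw [max_eq_right (by omega)]
    push_cast
    ring
  · subst h; simp [F]
  · rw [F, if_pos h, max_eq_left (by omega)]
    push_cast
    ring

lemma F_nonneg_arg (A C : Pt n → ℝ) {m : ℤ} (hm : 0 ≤ m) (u : Pt n) :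
    F A C m u = (m:ℝ) * C u := by
  rw [F_eq, max_eq_left (by omega)]
  push_cast; ring

lemma F_eq_of_AC {A C : Pt n → ℝ} {u : Pt n} (h : A u = C u) (m : ℤ) :
    F A C m u = (m:ℝ) * C u := by
  rw [F_eq, h]; ring

lemma F_subadd {A C : Pt n → ℝ} {u : Pt n} (h : A u ≤ C u) (a b : ℤ) :
    F A C (a + b) u ≤ F A C a u + F A C b u := by
  rw [F_eq, F_eq, F_eq]
  have h1 : (max 0 (-(a+b)) : ℤ) ≤ max 0 (-a) + max 0 (-b) := by omega
  have h2 : ((max 0 (-(a+b)) : ℤ) : ℝ) ≤ ((max 0 (-a) + max 0 (-b) : ℤ) : ℝ) := by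
    exact_mod_cast h1
  push_cast at h2 ⊢
  nlinarith [h2, sub_nonneg.mpr h]

lemma F_sum_le {A C : Pt n → ℝ} {u : Pt n} (h : A u ≤ C u) {ι : Type*}
    (E : Finset ι) (c : ι → ℤ) :
    F A C (∑ l ∈ E, c l) u ≤ ∑ l ∈ E, F A C (c l) u := by
  classical
  induction E using Finset.cons_induction with
  | empty => simp [F_zero]
  | cons a E ha ih =>
    rw [Finset.sum_cons, Finset.sum_cons]
    exact le_trans (F_subadd h _ _) (by linarith)

lemma F_nsmul (A C : Pt n → ℝ) (c : ℕ) (m : ℤ) (u : Pt n) :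
    F A C ((c:ℤ) * m) u = (c:ℝ) * F A C m u := by
  rcases Nat.eq_zero_or_pos c with hc | hc
  · subst hc; simp [F_zero]
  · rw [F_eq, F_eq]
    have hc0 : (0:ℤ) ≤ (c:ℤ) := Int.ofNat_nonneg c
    have : (max 0 (-((c:ℤ) * m)) : ℤ) = (c:ℤ) * max 0 (-m) := by
      rcases le_or_gt m 0 with h | h
      · rw [max_eq_right (by nlinarith), max_eq_right (by omega)]; ring
      · rw [max_eq_left (by nlinarith), max_eq_left (by omega)]; ring
    rw [this]
    push_cast
    ring

lemma multDU_zero (k : ℕ) (u : Pt n) : multDU k (0 : Multiset (Box n)) u = 0 := by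
  simp [multDU]

lemma multDU_add (k : ℕ) (D₁ D₂ : Multiset (Box n)) (u : Pt n) :
    multDU k (D₁ + D₂) u = multDU k D₁ u + multDU k D₂ u := by
  simp [multDU]

lemma multDU_nsmul (k : ℕ) (c : ℕ) (DU : Multiset (Box n)) (u : Pt n) :
    multDU k (c • DU) u = (c : ℤ) * multDU k DU u := by
  induction c with
  | zero => simp [multDU]
  | succ c ih =>
    rw [succ_nsmul, multDU_add, ih]
    push_cast
    ring

lemma multDU_replicate (k : ℕ) (c : ℕ) (R : Box n) (u : Pt n) :
    multDU k (Multiset.replicate c R) u = (c : ℤ) * R.mult k u := by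
  simp [multDU, Multiset.map_replicate, Multiset.sum_replicate, nsmul_eq_mul]

lemma multDU_finsum {ι : Type*} (k : ℕ) (E : Finset ι) (f : ι → Multiset (Box n))
    (u : Pt n) : multDU k (∑ l ∈ E, f l) u = ∑ l ∈ E, multDU k (f l) u := by
  classical
  induction E using Finset.cons_induction with
  | empty => simp [multDU]
  | cons a E ha ih => rw [Finset.sum_cons, Finset.sum_cons, multDU_add, ih]

lemma multDU_eq_zero {k : ℕ} {DU : Multiset (Box n)} {u : Pt n}
    (h : ∀ R ∈ DU, u ∉ R.vertices) : multDU k DU u = 0 := by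
  rw [multDU]
  apply Multiset.sum_eq_zero
  intro z hz
  rcases Multiset.mem_map.mp hz with ⟨R, hR, rfl⟩
  exact mult_eq_zero R (h R hR)

lemma Lk_eq_sum (k : ℕ) (A C : Pt n → ℝ) (DU : Multiset (Box n))
    (S : Finset (Pt n)) (hS : ∀ R ∈ DU, R.vertices ⊆ S) :
    Lk k A C DU = ∑ u ∈ S, F A C (multDU k DU u) u := by
  classical
  have hsub : DU.toFinset.biUnion Box.vertices ⊆ S := by
    intro u hu
    rcases Finset.mem_biUnion.mp hu with ⟨R, hR, hv⟩
    exact hS R (Multiset.mem_toFinset.mp hR) hv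
  rw [Lk, Finset.sum_subset hsub]
  · exact Finset.sum_congr rfl (fun u _ => rfl)
  · intro u hu hnu
    have h0 : multDU k DU u = 0 := multDU_eq_zero (fun R hR hv =>
      hnu (Finset.mem_biUnion.mpr ⟨R, Multiset.mem_toFinset.mpr hR, hv⟩))
    simp [F, h0]

lemma sum_mult_mul (k : ℕ) (C : Pt n → ℝ) (Q : Box n) (S : Finset (Pt n))
    (hQS : Q.vertices ⊆ S) :
    ∑ u ∈ S, (Q.mult k u : ℝ) * C u = Vvol k C Q := by
  rw [← Finset.sum_subset hQS (fun u _ hnu => by rw [mult_eq_zero Q hnu]; simp), Vvol]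
  exact Finset.sum_congr rfl fun u hu => by rw [mult_eq_sign Q hu]

end StmtAux
namespace StmtAux

lemma core (n k : ℕ) (D : Set (Pt n)) (A C : Pt n → ℝ)
    (hAC : ∀ u ∈ D, A u ≤ C u)
    (Q : Box n) (hQD : ∀ w ∈ Q.vertices, w ∈ D)
    (s : ℕ) (x : Fin s → Pt n) (hxinj : Function.Injective x)
    (hxv : ∀ i, x i ∈ Q.vertices ∧ Q.mult k (x i) = -1 ∧ A (x i) < C (x i))
    (hother : ∀ u ∈ Q.vertices, Q.mult k u = -1 → (∀ i, x i ≠ u) → A u = C u)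
    (DU : Fin s → Multiset (Box n))
    (hDUD : ∀ i, memRk k D (DU i)) (hDUpos : ∀ i, 0 < multDU k (DU i) (x i))
    (M : ℕ) (hM : M = ∏ l, (multDU k (DU l) (x l)).natAbs)
    (mi : Fin s → ℕ)
    (hmi : ∀ i, mi i = ∏ l ∈ Finset.univ.erase i, (multDU k (DU l) (x l)).natAbs)
    (E : Finset (Fin s)) :
    Lk k A C (Multiset.replicate M Q + ∑ l ∈ E, mi l • DU l) ≤
      (∑ j ∈ Eᶜ, (M:ℝ) * (C (x j) - A (x j))) + (M:ℝ) * Vvol k C Q +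
      ∑ l ∈ E, (mi l : ℝ) * Lk k A C (DU l) := by
  classical
  set t : Fin s → Pt n → ℤ := fun l u => multDU k (DU l) u with ht
  -- the ambient finite set of points
  set S : Finset (Pt n) :=
    Q.vertices ∪ (Finset.univ : Finset (Fin s)).biUnion
      (fun l => (DU l).toFinset.biUnion Box.vertices) with hSdef
  have hQS : Q.vertices ⊆ S := Finset.subset_union_left
  have hDUS : ∀ l, ∀ R ∈ DU l, R.vertices ⊆ S := by
    intro l R hR
    refine Finset.Subset.trans ?_ Finset.subset_union_right
    intro u hu
    exact Finset.mem_biUnion.mpr ⟨l, Finset.mem_univ l,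
      Finset.mem_biUnion.mpr ⟨R, Multiset.mem_toFinset.mpr hR, hu⟩⟩
  have hSD : ∀ u ∈ S, u ∈ D := by
    intro u hu
    rcases Finset.mem_union.mp hu with h | h
    · exact hQD u h
    · rcases Finset.mem_biUnion.mp h with ⟨l, -, hl⟩
      rcases Finset.mem_biUnion.mp hl with ⟨R, hR, hv⟩
      exact ((hDUD l R (Multiset.mem_toFinset.mp hR)).2) u hv
  have hACS : ∀ u ∈ S, A u ≤ C u := fun u hu => hAC u (hSD u hu)
  -- mi, M arithmetic
  have hMnat : ∀ j, mi j * (t j (x j)).natAbs = M := by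
    intro j
    rw [hmi, hM, ht]
    exact Finset.prod_erase_mul _ _ (Finset.mem_univ j)
  have keyM : ∀ j, (mi j : ℤ) * t j (x j) = (M : ℤ) := by
    intro j
    have h1 : t j (x j) = ((t j (x j)).natAbs : ℤ) :=
      (Int.natAbs_of_nonneg (le_of_lt (hDUpos j))).symm
    rw [h1, ← hMnat j]
    push_cast
    ring
  have hMpos : 0 < M := by
    rw [hM]
    apply Finset.prod_pos
    intro l _
    exact Int.natAbs_pos.mpr (ne_of_gt (hDUpos l))
  -- membership of boxes of the combined multiset
  have hvertS : ∀ R ∈ (Multiset.replicate M Q + ∑ l ∈ E, mi l • DU l),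
      R.vertices ⊆ S := by
    intro R hR
    rcases Multiset.mem_add.mp hR with h | h
    · rw [Multiset.eq_of_mem_replicate h]; exact hQS
    · rcases (Multiset.mem_sum (s := E) (a := R)).mp h with ⟨l, hlE, hl⟩
      exact hDUS l R (Multiset.mem_nsmul.mp hl).2
  -- multiplicity of the combined multiset
  have hmult : ∀ u, multDU k (Multiset.replicate M Q + ∑ l ∈ E, mi l • DU l) u
      = (M:ℤ) * Q.mult k u + ∑ l ∈ E, (mi l : ℤ) * t l u := by
    intro u
    rw [multDU_add, multDU_replicate, multDU_finsum]
    congr 1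
    exact Finset.sum_congr rfl fun l _ => multDU_nsmul k (mi l) (DU l) u
  -- pointwise bound
  have key : ∀ u ∈ S,
      F A C ((M:ℤ) * Q.mult k u + ∑ l ∈ E, (mi l : ℤ) * t l u) u ≤
        (M:ℝ) * ((Q.mult k u : ℝ) * C u) +
        (∑ j ∈ Eᶜ, if u = x j then (M:ℝ) * (C (x j) - A (x j)) else 0) +
        ∑ l ∈ E, F A C ((mi l : ℤ) * t l u) u := by
    intro u huS
    have hACu := hACS u huS
    by_cases hx : ∃ j, u = x j
    · obtain ⟨j, rfl⟩ := hx
      have hmQ : Q.mult k (x j) = -1 := (hxv j).2.1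
      by_cases hjE : j ∈ E
      · have hextra : (∑ j' ∈ Eᶜ,
            if x j = x j' then (M:ℝ) * (C (x j') - A (x j')) else 0) = 0 := by
          apply Finset.sum_eq_zero
          intro j' hj'
          rw [if_neg]
          intro h
          exact (Finset.mem_compl.mp hj') ((hxinj h) ▸ hjE)
        have hsplit : (M:ℤ) * Q.mult k (x j) + ∑ l ∈ E, (mi l : ℤ) * t l (x j)
            = ∑ l ∈ E.erase j, (mi l : ℤ) * t l (x j) := by
          rw [hmQ, ← Finset.add_sum_erase E _ hjE, keyM j]
          ring
        have hFsum : (∑ l ∈ E, F A C ((mi l : ℤ) * t l (x j)) (x j))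
            = (M:ℝ) * C (x j) + ∑ l ∈ E.erase j, F A C ((mi l : ℤ) * t l (x j)) (x j) := by
          rw [← Finset.add_sum_erase E _ hjE, keyM j,
            F_nonneg_arg A C (by exact_mod_cast (Nat.zero_le M)) (x j)]
          push_cast
          ring_nf
        rw [hsplit, hextra, hFsum, hmQ]
        have := F_sum_le hACu (E.erase j) (fun l => (mi l : ℤ) * t l (x j))
        push_cast
        linarith
      · have hjEc : j ∈ Eᶜ := Finset.mem_compl.mpr hjE
        have hextra : (∑ j' ∈ Eᶜ,
            if x j = x j' then (M:ℝ) * (C (x j') - A (x j')) else 0)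
            = (M:ℝ) * (C (x j) - A (x j)) := by
          rw [Finset.sum_eq_single j]
          · rw [if_pos rfl]
          · intro j' _ hne
            rw [if_neg (fun h => hne (hxinj h).symm)]
          · intro h; exact absurd hjEc h
        rw [hextra, hmQ]
        have hFa : F A C ((M:ℤ) * (-1)) (x j) = -(M:ℝ) * A (x j) := by
          rw [F, if_neg (by omega), if_pos (by omega)]
          push_cast
          ring
        have h1 := F_subadd hACu ((M:ℤ) * (-1)) (∑ l ∈ E, (mi l : ℤ) * t l (x j))
        have h2 := F_sum_le hACu E (fun l => (mi l : ℤ) * t l (x j))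
        rw [hFa] at h1
        push_cast at h1 ⊢
        linarith
    · push_neg at hx
      have hextra : (∑ j' ∈ Eᶜ,
          if u = x j' then (M:ℝ) * (C (x j') - A (x j')) else 0) = 0 :=
        Finset.sum_eq_zero fun j' _ => if_neg (hx j')
      have hFa : F A C ((M:ℤ) * Q.mult k u) u = (M:ℝ) * ((Q.mult k u : ℝ) * C u) := by
        rcases mult_mem Q k u with h | h | h
        · rw [h]; simp [F_zero]
        · rw [h, F_nonneg_arg A C (by omega)]
          push_cast; ring
        · have hvtx : u ∈ Q.vertices := by
            rw [mem_vertices_iff]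
            by_contra hc
            rw [mult_eq_zero Q (fun hh => hc ((mem_vertices_iff Q u).mp hh))] at h
            exact absurd h (by norm_num)
          have hACeq : A u = C u := hother u hvtx h (fun i => (hx i).symm)
          rw [F_eq_of_AC hACeq]
          push_cast; ring
      have h1 := F_subadd hACu ((M:ℤ) * Q.mult k u) (∑ l ∈ E, (mi l : ℤ) * t l u)
      have h2 := F_sum_le hACu E (fun l => (mi l : ℤ) * t l u)
      rw [hFa] at h1
      rw [hextra]
      push_cast at h1 ⊢
      linarith
  -- assemble
  rw [Lk_eq_sum k A C _ S hvertS]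
  have step1 : ∑ u ∈ S, F A C (multDU k (Multiset.replicate M Q + ∑ l ∈ E, mi l • DU l) u) u ≤
      ∑ u ∈ S, ((M:ℝ) * ((Q.mult k u : ℝ) * C u) +
        (∑ j ∈ Eᶜ, if u = x j then (M:ℝ) * (C (x j) - A (x j)) else 0) +
        ∑ l ∈ E, F A C ((mi l : ℤ) * t l u) u) := by
    apply Finset.sum_le_sum
    intro u hu
    rw [hmult u]
    exact key u hu
  refine le_trans step1 (le_of_eq ?_)
  have e1 : ∑ u ∈ S, (M:ℝ) * ((Q.mult k u : ℝ) * C u) = (M:ℝ) * Vvol k C Q := by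
    rw [← Finset.mul_sum, sum_mult_mul k C Q S hQS]
  have e2 : (∑ u ∈ S, ∑ j ∈ Eᶜ, if u = x j then (M:ℝ) * (C (x j) - A (x j)) else 0)
      = ∑ j ∈ Eᶜ, (M:ℝ) * (C (x j) - A (x j)) := by
    rw [Finset.sum_comm]
    apply Finset.sum_congr rfl
    intro j hj
    rw [Finset.sum_ite_eq' S (x j), if_pos (hQS (hxv j).1)]
  have e3 : (∑ u ∈ S, ∑ l ∈ E, F A C ((mi l : ℤ) * t l u) u)
      = ∑ l ∈ E, (mi l : ℝ) * Lk k A C (DU l) := by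
    rw [Finset.sum_comm]
    apply Finset.sum_congr rfl
    intro l hl
    rw [Lk_eq_sum k A C (DU l) S (hDUS l), Finset.mul_sum]
    exact Finset.sum_congr rfl fun u hu => F_nsmul A C (mi l) (t l u) u
  rw [Finset.sum_add_distrib, Finset.sum_add_distrib, e1, e2, e3]
  ring

end StmtAux
/-- Proposition 5.4: upper bounds for `L_k^{(A,C)}` of the
combined disjoint unions `Ř` and `Řᵢ`. -/
theorem stmt13 (n k : ℕ) (hn : 1 ≤ n) (hk1 : 1 ≤ k) (hkn : k ≤ n)
    (D : Set (Pt n)) (hD : IsMesh D) (A C : Pt n → ℝ)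
    (hAI : ∀ u ∈ D, A u ∈ Set.Icc (0:ℝ) 1) (hCI : ∀ u ∈ D, C u ∈ Set.Icc (0:ℝ) 1)
    (hAC : ∀ u ∈ D, A u ≤ C u)
    (hL : ∀ DU : Multiset (Box n), memRk k D DU → 0 ≤ Lk k A C DU)
    (hdelta : ∀ d ∈ D, deltaK k D A C d = 0)
    (hvert : ∀ w : Pt n, isCubeVertex w → A w = C w)
    (Q : Box n) (hQ : Q.IsKBox k) (hQD : ∀ w ∈ Q.vertices, w ∈ D)
    (v : ℝ) (hv : Vvol k C Q = v) (hvneg : v < 0)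
    (s : ℕ) (hs1 : 1 ≤ s) (hs2 : s ≤ 2 ^ (k - 1))
    (x : Fin s → Pt n) (hxinj : Function.Injective x)
    (hxv : ∀ i, x i ∈ Q.vertices ∧ Q.mult k (x i) = -1 ∧ A (x i) < C (x i))
    (hother : ∀ u ∈ Q.vertices, Q.mult k u = -1 → (∀ i, x i ≠ u) → A u = C u)
    (DU : Fin s → Multiset (Box n))
    (hDU : ∀ i, memRk k D (DU i) ∧ 0 < multDU k (DU i) (x i) ∧
      Lk k A C (DU i) < |(multDU k (DU i) (x i) : ℝ)| * |v| / (s : ℝ))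
    (M : ℕ) (hM : M = ∏ l, (multDU k (DU l) (x l)).natAbs)
    (mi : Fin s → ℕ)
    (hmi : ∀ i, mi i = ∏ l ∈ Finset.univ.erase i, (multDU k (DU l) (x l)).natAbs)
    (Rchk : Multiset (Box n))
    (hRchk : Rchk = Multiset.replicate M Q + ∑ l, mi l • DU l)
    (Rchki : Fin s → Multiset (Box n))
    (hRchki : ∀ i, Rchki i =
      Multiset.replicate M Q + ∑ l ∈ Finset.univ.erase i, mi l • DU l) :
    (∀ i, Lk k A C (Rchki i) ≤
        (M : ℝ) * (C (x i) - A (x i)) + (M : ℝ) * Vvol k C Q +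
        ∑ l ∈ Finset.univ.erase i, (mi l : ℝ) * Lk k A C (DU l)) ∧
    Lk k A C Rchk ≤ (M : ℝ) * Vvol k C Q + ∑ l, (mi l : ℝ) * Lk k A C (DU l) := by
  classical
  have hcore := StmtAux.core n k D A C hAC Q hQD s x hxinj hxv hother DU
    (fun i => (hDU i).1) (fun i => (hDU i).2.1) M hM mi hmi
  constructor
  · intro i
    have h := hcore (Finset.univ.erase i)
    rw [← hRchki i] at h
    refine le_trans h (le_of_eq ?_)
    rw [Finset.compl_erase, Finset.compl_univ]
    rw [Finset.sum_insert (Finset.notMem_empty i), Finset.sum_empty, add_zero]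
  · have h := hcore Finset.univ
    rw [← hRchk] at h
    refine le_trans h (le_of_eq ?_)
    rw [Finset.compl_univ, Finset.sum_empty, zero_add]
end

section
/- Let D be a dense countably infinite mesh in I^n with an enumeration (d_i)_{i∈ℕ} of its elements, and fix an integer k with 1 ≤ k ≤ n. Let A, B : D → I be functions with A ≤ B and L_k^{(A,B)}(DU) ≥ 0 for all DU ∈ R_k(D), and assume A(v) = B(v) for all vertices v of the unit cube I^n. Define the sequence of functions B^{(i)} : D → I by B^{(0)} = B and, for i ≥ 1, B^{(i)}(d) = B^{(i−1)}(d) for d ≠ d_i and B^{(i)}(d_i) = B^{(i−1)}(d_i) − δ_{k,D}^{(A,B^{(i−1)})}(d_i). Let C : D → I be the pointwise limit of (B^{(i)})_{i∈ℕ} (which exists since at each point the sequence is decreasing and bounded). Then C is k-increasing on D, i.e., L_k^{(C,C)}(DU) ≥ 0 for all DU ∈ R_k(D). -/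
open scoped Classical BigOperators

namespace KIncr

variable {n : ℕ}

lemma mem_vertices_of_isVertex {R : Box n} {u : Pt n} (h : R.IsVertex u) :
    u ∈ R.vertices := by
  classical
  refine Finset.mem_image.2 ⟨fun i => decide (u i = R.hi i), Finset.mem_univ _, ?_⟩
  funext i
  by_cases hc : u i = R.hi i
  · simp [hc]
  · rcases h i with h' | h'
    · rw [if_neg (by simpa using hc)]
      exact h'.symm
    · exact absurd h' hc

lemma mult_eq_zero_of_not_mem {k : ℕ} {R : Box n} {u : Pt n} (h : u ∉ R.vertices) :
    R.mult k u = 0 := by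
  rw [Box.mult, if_neg]
  exact fun hv => h (mem_vertices_of_isVertex hv)

lemma multDU_eq_zero {k : ℕ} {DU : Multiset (Box n)} {u : Pt n}
    (h : u ∉ DU.toFinset.biUnion Box.vertices) : multDU k DU u = 0 := by
  rw [multDU]
  refine Multiset.sum_eq_zero ?_
  intro z hz
  rcases Multiset.mem_map.1 hz with ⟨R, hR, rfl⟩
  refine mult_eq_zero_of_not_mem ?_
  intro hu
  exact h (Finset.mem_biUnion.2 ⟨R, Multiset.mem_toFinset.2 hR, hu⟩)

/-- negative part of an integer, as a real. -/
noncomputable def np (m : ℤ) : ℝ := max (-(m:ℝ)) 0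

/-- positive part of an integer, as a real. -/
noncomputable def pp (m : ℤ) : ℝ := max ((m:ℝ)) 0

lemma np_nonneg (m : ℤ) : 0 ≤ np m := le_max_right _ _
lemma pp_nonneg (m : ℤ) : 0 ≤ pp m := le_max_right _ _

/-- the term of the `Lk` sum. -/
noncomputable def Lterm (A B : Pt n → ℝ) (m : ℤ) (u : Pt n) : ℝ :=
  if 0 < m then (m:ℝ) * B u else if m < 0 then (m:ℝ) * A u else 0

lemma Lterm_eq_B (A B : Pt n → ℝ) (m : ℤ) (u : Pt n) :
    Lterm A B m u = (m:ℝ) * B u + np m * (B u - A u) := by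
  rcases lt_trichotomy m 0 with h | h | h
  · have h1 : ¬ (0 < m) := by omega
    have h2 : (m:ℝ) ≤ 0 := by exact_mod_cast h.le
    simp only [Lterm, np, if_neg h1, if_pos h]
    rw [max_eq_left (by linarith)]
    ring
  · simp [Lterm, np, h]
  · have h2 : (0:ℝ) ≤ (m:ℝ) := by exact_mod_cast h.le
    simp only [Lterm, np, if_pos h]
    rw [max_eq_right (by linarith)]
    ring

lemma Lterm_eq_A (A B : Pt n → ℝ) (m : ℤ) (u : Pt n) :
    Lterm A B m u = (m:ℝ) * A u + pp m * (B u - A u) := by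
  rcases lt_trichotomy m 0 with h | h | h
  · have h1 : ¬ (0 < m) := by omega
    have h2 : (m:ℝ) ≤ 0 := by exact_mod_cast h.le
    simp only [Lterm, pp, if_neg h1, if_pos h]
    rw [max_eq_right (by linarith)]
    ring
  · simp [Lterm, pp, h]
  · have h2 : (0:ℝ) ≤ (m:ℝ) := by exact_mod_cast h.le
    simp only [Lterm, pp, if_pos h]
    rw [max_eq_left (by linarith)]
    ring

lemma Lterm_self (C : Pt n → ℝ) (m : ℤ) (u : Pt n) :
    Lterm C C m u = (m:ℝ) * C u := by
  rw [Lterm_eq_B]; ring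

lemma Lk_eq_sum {k : ℕ} (A B : Pt n → ℝ) (DU : Multiset (Box n)) (s : Finset (Pt n))
    (hs : DU.toFinset.biUnion Box.vertices ⊆ s) :
    Lk k A B DU = ∑ u ∈ s, Lterm A B (multDU k DU u) u := by
  rw [Lk]
  rw [Finset.sum_subset hs]
  · exact Finset.sum_congr rfl (fun u _ => rfl)
  · intro u _ hu
    rw [multDU_eq_zero hu]
    simp [Lterm]

end KIncr

namespace KIncr

variable {n : ℕ}

lemma multDU_zero (k : ℕ) (u : Pt n) : multDU k (0 : Multiset (Box n)) u = 0 := by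
  simp [multDU]

lemma multDU_add (k : ℕ) (DU₁ DU₂ : Multiset (Box n)) (u : Pt n) :
    multDU k (DU₁ + DU₂) u = multDU k DU₁ u + multDU k DU₂ u := by
  simp [multDU]

lemma multDU_nsmul (k : ℕ) (t : ℕ) (DU : Multiset (Box n)) (u : Pt n) :
    multDU k (t • DU) u = t * multDU k DU u := by
  induction t with
  | zero => simp [multDU]
  | succ t ih =>
      rw [succ_nsmul, multDU_add, ih]
      push_cast; ring

lemma multDU_finsum {α : Type*} (k : ℕ) (s : Finset α) (G : α → Multiset (Box n))
    (u : Pt n) : multDU k (∑ a ∈ s, G a) u = ∑ a ∈ s, multDU k (G a) u := by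
  classical
  induction s using Finset.induction_on with
  | empty => simp [multDU]
  | insert _ _ hnotmem ih =>
      rw [Finset.sum_insert hnotmem, Finset.sum_insert hnotmem, multDU_add, ih]

lemma memRk_add {k : ℕ} {D : Set (Pt n)} {DU₁ DU₂ : Multiset (Box n)}
    (h₁ : memRk k D DU₁) (h₂ : memRk k D DU₂) : memRk k D (DU₁ + DU₂) := by
  intro R hR
  rcases Multiset.mem_add.1 hR with h | h
  · exact h₁ R h
  · exact h₂ R h

lemma memRk_zero {k : ℕ} {D : Set (Pt n)} : memRk k D (0 : Multiset (Box n)) := by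
  intro R hR; simp at hR

lemma memRk_nsmul {k : ℕ} {D : Set (Pt n)} {DU : Multiset (Box n)} (t : ℕ)
    (h : memRk k D DU) : memRk k D (t • DU) := by
  induction t with
  | zero => simpa using (memRk_zero : memRk k D 0)
  | succ t ih => rw [succ_nsmul]; exact memRk_add ih h

lemma memRk_finsum {α : Type*} {k : ℕ} {D : Set (Pt n)} (s : Finset α)
    (G : α → Multiset (Box n)) (h : ∀ a ∈ s, memRk k D (G a)) :
    memRk k D (∑ a ∈ s, G a) := by
  classical
  induction s using Finset.induction_on with
  | empty => simpa using (memRk_zero : memRk k D 0)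
  | @insert a s' hnotmem ih =>
      rw [Finset.sum_insert hnotmem]
      exact memRk_add (h a (Finset.mem_insert_self a s'))
        (ih fun b hb => h b (Finset.mem_insert_of_mem hb))

lemma vertices_mem_D {k : ℕ} {D : Set (Pt n)} {DU : Multiset (Box n)}
    (h : memRk k D DU) : ∀ u ∈ DU.toFinset.biUnion Box.vertices, u ∈ D := by
  intro u hu
  rcases Finset.mem_biUnion.1 hu with ⟨R, hR, hu'⟩
  exact (h R (Multiset.mem_toFinset.1 hR)).2 u hu'

/-- Lk depends on B,A only through their values on the vertex set. -/
lemma Lk_congr {k : ℕ} (A B B' : Pt n → ℝ) (DU : Multiset (Box n))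
    (h : ∀ u ∈ DU.toFinset.biUnion Box.vertices, B u = B' u) :
    Lk k A B DU = Lk k A B' DU := by
  rw [Lk, Lk]
  refine Finset.sum_congr rfl ?_
  intro u hu
  rw [h u hu]

/-- Lk is monotone in the upper function. -/
lemma Lk_mono {k : ℕ} (A B B' : Pt n → ℝ) (DU : Multiset (Box n))
    (h : ∀ u ∈ DU.toFinset.biUnion Box.vertices, B u ≤ B' u) :
    Lk k A B DU ≤ Lk k A B' DU := by
  rw [Lk_eq_sum A B DU _ (le_refl _), Lk_eq_sum A B' DU _ (le_refl _)]
  refine Finset.sum_le_sum ?_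
  intro u hu
  rw [Lterm_eq_A, Lterm_eq_A]
  have := h u hu
  have hpp := pp_nonneg (multDU k DU u)
  nlinarith [pp_nonneg (multDU k DU u)]

/-- Changing B at a single point x changes Lk by `pp (m x) * (B' x - B x)`. -/
lemma Lk_update {k : ℕ} (A B B' : Pt n → ℝ) (DU : Multiset (Box n)) (x : Pt n)
    (h : ∀ u, u ≠ x → B' u = B u) :
    Lk k A B' DU = Lk k A B DU + pp (multDU k DU x) * (B' x - B x) := by
  classical
  set s : Finset (Pt n) := insert x (DU.toFinset.biUnion Box.vertices) with hs
  have hsub : DU.toFinset.biUnion Box.vertices ⊆ s := Finset.subset_insert _ _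
  rw [Lk_eq_sum A B' DU s hsub, Lk_eq_sum A B DU s hsub]
  have key : ∀ u ∈ s, Lterm A B' (multDU k DU u) u
      = Lterm A B (multDU k DU u) u
        + (if u = x then pp (multDU k DU x) * (B' x - B x) else 0) := by
    intro u _
    by_cases hux : u = x
    · subst hux
      rw [if_pos rfl, Lterm_eq_A, Lterm_eq_A]
      ring
    · rw [if_neg hux, add_zero]
      simp only [Lterm]
      rw [h u hux]
  rw [Finset.sum_congr rfl key, Finset.sum_add_distrib]
  congr 1
  rw [Finset.sum_ite_eq' s x (fun _ => pp (multDU k DU x) * (B' x - B x))]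
  rw [if_pos (Finset.mem_insert_self x _)]

end KIncr

namespace KIncr

lemma exists_good_box {n k : ℕ} (hk1 : 1 ≤ k) (hkn : k ≤ n)
    (δ : Fin n → Set ℝ) (hδI : ∀ i, δ i ⊆ Set.Icc (0:ℝ) 1)
    (hδ0 : ∀ i, (0:ℝ) ∈ δ i) (hδ1 : ∀ i, (1:ℝ) ∈ δ i)
    (x : Pt n) (hx : ∀ i, x i ∈ δ i) (i₀ : Fin n)
    (h0 : 0 < x i₀) (h1 : x i₀ < 1) :
    ∃ R : Box n, R.IsKBox k ∧ (∀ v ∈ R.vertices, ∀ i, v i ∈ δ i) ∧ R.mult k x = 1 := by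
  classical
  obtain ⟨K, hK0, -, hKcard⟩ := Finset.exists_subsuperset_card_eq
    (Finset.subset_univ {i₀}) (by simpa using hk1) (by simpa using hkn)
  have hi₀K : i₀ ∈ K := hK0 (Finset.mem_singleton_self i₀)
  have hxI : ∀ i, x i ∈ Set.Icc (0:ℝ) 1 := fun i => hδI i (hx i)
  set b₀ : ℕ := ((K.erase i₀).filter (fun i => x i < 1)).card with hb₀
  set bot : Prop := ¬ Even b₀ with hbotdef
  set lof : Pt n := fun i => if i ∈ K then (if i = i₀ then (if bot then x i₀ else 0)
      else (if x i < 1 then x i else 0)) else x i with hlof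
  set hif : Pt n := fun i => if i ∈ K then (if i = i₀ then (if bot then 1 else x i₀) else 1)
      else x i with hhif
  -- canonical equations
  have e_out : ∀ i, i ∉ K → lof i = x i ∧ hif i = x i := by
    intro i hi
    constructor
    · rw [hlof]; simp only [if_neg hi]
    · rw [hhif]; simp only [if_neg hi]
  have e_lt : ∀ i, i ∈ K → i ≠ i₀ → x i < 1 → lof i = x i ∧ hif i = 1 := by
    intro i hi hii hl
    constructor
    · rw [hlof]; simp only [if_pos hi, if_neg hii, if_pos hl]
    · rw [hhif]; simp only [if_pos hi, if_neg hii]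
  have e_ge : ∀ i, i ∈ K → i ≠ i₀ → ¬ x i < 1 → lof i = 0 ∧ hif i = 1 := by
    intro i hi hii hl
    constructor
    · rw [hlof]; simp only [if_pos hi, if_neg hii, if_neg hl]
    · rw [hhif]; simp only [if_pos hi, if_neg hii]
  have e_bt : bot → lof i₀ = x i₀ ∧ hif i₀ = 1 := by
    intro hb
    constructor
    · rw [hlof]
      simp only [if_pos hi₀K, eq_self_iff_true, if_true, if_pos hb]
    · rw [hhif]
      simp only [if_pos hi₀K, eq_self_iff_true, if_true, if_pos hb]
  have e_bf : ¬ bot → lof i₀ = 0 ∧ hif i₀ = x i₀ := by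
    intro hb
    constructor
    · rw [hlof]
      simp only [if_pos hi₀K, eq_self_iff_true, if_true, if_neg hb]
    · rw [hhif]
      simp only [if_pos hi₀K, eq_self_iff_true, if_true, if_neg hb]
  -- membership in δ
  have hloδ : ∀ i, lof i ∈ δ i := by
    intro i
    by_cases hi : i ∈ K
    · by_cases hii : i = i₀
      · subst hii
        by_cases hb : bot
        · rw [(e_bt hb).1]; exact hx i
        · rw [(e_bf hb).1]; exact hδ0 i
      · by_cases hl : x i < 1
        · rw [(e_lt i hi hii hl).1]; exact hx i
        · rw [(e_ge i hi hii hl).1]; exact hδ0 i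
    · rw [(e_out i hi).1]; exact hx i
  have hhiδ : ∀ i, hif i ∈ δ i := by
    intro i
    by_cases hi : i ∈ K
    · by_cases hii : i = i₀
      · subst hii
        by_cases hb : bot
        · rw [(e_bt hb).2]; exact hδ1 i
        · rw [(e_bf hb).2]; exact hx i
      · by_cases hl : x i < 1
        · rw [(e_lt i hi hii hl).2]; exact hδ1 i
        · rw [(e_ge i hi hii hl).2]; exact hδ1 i
    · rw [(e_out i hi).2]; exact hx i
  -- strict inequality on K
  have hlt : ∀ i, i ∈ K → lof i < hif i := by
    intro i hi
    by_cases hii : i = i₀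
    · subst hii
      by_cases hb : bot
      · rw [(e_bt hb).1, (e_bt hb).2]; exact h1
      · rw [(e_bf hb).1, (e_bf hb).2]; exact h0
    · by_cases hl : x i < 1
      · rw [(e_lt i hi hii hl).1, (e_lt i hi hii hl).2]; exact hl
      · rw [(e_ge i hi hii hl).1, (e_ge i hi hii hl).2]; norm_num
  set R : Box n := ⟨lof, hif⟩ with hR
  have hRlo : R.lo = lof := rfl
  have hRhi : R.hi = hif := rfl
  have hle : ∀ i, R.lo i ≤ R.hi i := by
    intro i
    rw [hRlo, hRhi]
    by_cases hi : i ∈ K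
    · exact (hlt i hi).le
    · rw [(e_out i hi).1, (e_out i hi).2]
  have hfilter : Finset.univ.filter (fun i => R.lo i < R.hi i) = K := by
    ext i
    simp only [Finset.mem_filter, Finset.mem_univ, true_and, hRlo, hRhi]
    constructor
    · intro h
      by_contra hi
      rw [(e_out i hi).1, (e_out i hi).2] at h
      exact lt_irrefl _ h
    · exact hlt i
  -- x is a vertex
  have hvx : R.IsVertex x := by
    intro i
    rw [hRlo, hRhi]
    by_cases hi : i ∈ K
    · by_cases hii : i = i₀
      · subst hii
        by_cases hb : bot
        · left; rw [(e_bt hb).1]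
        · right; rw [(e_bf hb).2]
      · by_cases hl : x i < 1
        · left; rw [(e_lt i hi hii hl).1]
        · right
          rw [(e_ge i hi hii hl).2]
          exact le_antisymm (hxI i).2 (not_lt.1 hl)
    · left; rw [(e_out i hi).1]
  -- characterize when x sits at the bottom
  have hlofilter : ∀ i, i ∈ K → (x i = lof i ↔ (if i = i₀ then bot else x i < 1)) := by
    intro i hi
    by_cases hii : i = i₀
    · subst hii
      rw [if_pos rfl]
      constructor
      · intro h
        by_cases hb : bot
        · exact hb
        · exfalso
          rw [(e_bf hb).1] at h
          exact absurd h.symm (ne_of_lt h0)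
      · intro hb
        rw [(e_bt hb).1]
    · rw [if_neg hii]
      constructor
      · intro h
        by_contra hl
        rw [(e_ge i hi hii hl).1] at h
        have hx1 : x i = 1 := le_antisymm (hxI i).2 (not_lt.1 hl)
        rw [hx1] at h; norm_num at h
      · intro hl
        rw [(e_lt i hi hii hl).1]
  -- cardinality of the bottom filter
  have hcardsplit : (Finset.univ.filter (fun i => x i = R.lo i)).card
      = (K.filter (fun i => x i = lof i)).card + (n - k) := by
    have hdisj : Finset.univ.filter (fun i => x i = R.lo i)
        = (K.filter (fun i => x i = lof i)) ∪ Kᶜ := by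
      ext i
      simp only [Finset.mem_filter, Finset.mem_univ, true_and, Finset.mem_union,
        Finset.mem_compl, hRlo]
      constructor
      · intro h
        by_cases hi : i ∈ K
        · exact Or.inl ⟨hi, h⟩
        · exact Or.inr hi
      · rintro (⟨-, h⟩ | h)
        · exact h
        · exact ((e_out i h).1).symm
    rw [hdisj, Finset.card_union_of_disjoint]
    · congr 1
      rw [Finset.card_compl, hKcard]
      simp
    · rw [Finset.disjoint_right]
      intro i hi
      simp only [Finset.mem_compl] at hi
      simp only [Finset.mem_filter]
      tauto
  have hKfilter : (K.filter (fun i => x i = lof i)).card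
      = b₀ + (if bot then 1 else 0) := by
    have hsplit : K.filter (fun i => x i = lof i)
        = ((K.erase i₀).filter (fun i => x i < 1))
          ∪ (if bot then {i₀} else ∅) := by
      ext i
      simp only [Finset.mem_filter, Finset.mem_union, Finset.mem_erase]
      constructor
      · rintro ⟨hi, h⟩
        by_cases hii : i = i₀
        · subst hii
          have hb := (hlofilter i hi).1 h
          rw [if_pos rfl] at hb
          right; rw [if_pos hb]; exact Finset.mem_singleton_self _
        · left
          have hl := (hlofilter i hi).1 h
          rw [if_neg hii] at hl
          exact ⟨⟨hii, hi⟩, hl⟩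
      · rintro (⟨⟨hii, hi⟩, h⟩ | h)
        · exact ⟨hi, (hlofilter i hi).2 (by rw [if_neg hii]; exact h)⟩
        · by_cases hb : bot
          · rw [if_pos hb, Finset.mem_singleton] at h
            subst h
            exact ⟨hi₀K, (hlofilter _ hi₀K).2 (by rw [if_pos rfl]; exact hb)⟩
          · rw [if_neg hb] at h; simp at h
    rw [hsplit, Finset.card_union_of_disjoint]
    · congr 1
      by_cases hb : bot
      · rw [if_pos hb, if_pos hb]; simp
      · rw [if_neg hb, if_neg hb]; simp
    · rw [Finset.disjoint_right]
      intro i hi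
      by_cases hb : bot
      · rw [if_pos hb, Finset.mem_singleton] at hi
        subst hi
        simp only [Finset.mem_filter, Finset.mem_erase]
        tauto
      · rw [if_neg hb] at hi; simp at hi
  have heven : Even ((K.filter (fun i => x i = lof i)).card) := by
    rw [hKfilter]
    by_cases hb : bot
    · rw [if_pos hb]
      have ho : ¬ Even b₀ := hb
      rw [Nat.not_even_iff_odd] at ho
      rcases ho with ⟨c, hc⟩
      exact ⟨c + 1, by omega⟩
    · rw [if_neg hb]
      have he : Even b₀ := not_not.1 hb
      rcases he with ⟨c, hc⟩
      exact ⟨c, by omega⟩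
  have hsign : R.sign k x = 1 := by
    rw [Box.sign, hcardsplit]
    have he2 : Even ((K.filter (fun i => x i = lof i)).card + (n - k) + (n - k)) := by
      rcases heven with ⟨c, hc⟩
      exact ⟨c + (n - k), by omega⟩
    exact Even.neg_one_pow he2
  refine ⟨R, ⟨?_, ?_, hle, by rw [hfilter]; exact hKcard⟩, ?_, ?_⟩
  · intro i
    exact hδI i (hloδ i)
  · intro i
    exact hδI i (hhiδ i)
  · intro v hv i
    rcases Finset.mem_image.1 hv with ⟨ε, -, rfl⟩
    by_cases hε : ε i
    · simpa [hε] using hhiδ i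
    · simpa [hε] using hloδ i
  · rw [Box.mult, if_pos hvx, hsign]

end KIncr

namespace KIncr

lemma finset_exists_bound {α : Type*} (s : Finset α) (P : α → ℕ → Prop)
    (h : ∀ a ∈ s, ∃ N, ∀ i, N ≤ i → P a i) :
    ∃ N, ∀ a ∈ s, ∀ i, N ≤ i → P a i := by
  classical
  induction s using Finset.induction_on with
  | empty => exact ⟨0, by simp⟩
  | @insert a s' ha ih =>
      obtain ⟨N₁, hN₁⟩ := h a (Finset.mem_insert_self a s')
      obtain ⟨N₂, hN₂⟩ := ih (fun b hb => h b (Finset.mem_insert_of_mem hb))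
      refine ⟨max N₁ N₂, ?_⟩
      intro b hb i hi
      rcases Finset.mem_insert.1 hb with rfl | hb
      · exact hN₁ i (le_trans (le_max_left _ _) hi)
      · exact hN₂ b hb i (le_trans (le_max_right _ _) hi)

lemma np_le {m : ℤ} {c : ℝ} (h1 : -(m:ℝ) ≤ c) (h2 : 0 ≤ c) : np m ≤ c :=
  max_le h1 h2

lemma neg_le_np (m : ℤ) : -(m:ℝ) ≤ np m := le_max_left _ _

lemma np_of_neg {m : ℤ} (h : m < 0) : np m = -(m:ℝ) := by
  rw [np, max_eq_left]
  have : (m:ℝ) < 0 := by exact_mod_cast h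
  linarith

lemma np_of_nonneg {m : ℤ} (h : 0 ≤ m) : np m = 0 := by
  rw [np, max_eq_right]
  have : (0:ℝ) ≤ (m:ℝ) := by exact_mod_cast h
  linarith

lemma Lk_split {n k : ℕ} (A C : Pt n → ℝ) (E : Multiset (Box n)) (s : Finset (Pt n))
    (hs : E.toFinset.biUnion Box.vertices ⊆ s) :
    Lk k A C E = Lk k C C E + ∑ u ∈ s, np (multDU k E u) * (C u - A u) := by
  rw [Lk_eq_sum A C E s hs, Lk_eq_sum C C E s hs, ← Finset.sum_add_distrib]
  refine Finset.sum_congr rfl ?_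
  intro u _
  rw [Lterm_eq_B, Lterm_self]

lemma LkCC_eq_sum {n k : ℕ} (C : Pt n → ℝ) (E : Multiset (Box n)) (s : Finset (Pt n))
    (hs : E.toFinset.biUnion Box.vertices ⊆ s) :
    Lk k C C E = ∑ u ∈ s, (multDU k E u : ℝ) * C u := by
  rw [Lk_eq_sum C C E s hs]
  exact Finset.sum_congr rfl (fun u _ => Lterm_self C _ u)

lemma LkCC_zero {n k : ℕ} (C : Pt n → ℝ) : Lk k C C (0 : Multiset (Box n)) = 0 := by
  simp [Lk]

lemma LkCC_add {n k : ℕ} (C : Pt n → ℝ) (E₁ E₂ : Multiset (Box n)) :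
    Lk k C C (E₁ + E₂) = Lk k C C E₁ + Lk k C C E₂ := by
  classical
  set s := ((E₁ + E₂).toFinset.biUnion Box.vertices) ∪
    (E₁.toFinset.biUnion Box.vertices) ∪ (E₂.toFinset.biUnion Box.vertices) with hs
  have h0 : (E₁ + E₂).toFinset.biUnion Box.vertices ⊆ s :=
    (Finset.subset_union_left.trans Finset.subset_union_left)
  have h1 : E₁.toFinset.biUnion Box.vertices ⊆ s :=
    (Finset.subset_union_right.trans Finset.subset_union_left)
  have h2 : E₂.toFinset.biUnion Box.vertices ⊆ s := Finset.subset_union_right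
  rw [LkCC_eq_sum C _ s h0, LkCC_eq_sum C E₁ s h1, LkCC_eq_sum C E₂ s h2,
    ← Finset.sum_add_distrib]
  refine Finset.sum_congr rfl ?_
  intro u _
  rw [multDU_add]
  push_cast
  ring

lemma LkCC_nsmul {n k : ℕ} (C : Pt n → ℝ) (t : ℕ) (E : Multiset (Box n)) :
    Lk k C C (t • E) = (t : ℝ) * Lk k C C E := by
  induction t with
  | zero => simp [LkCC_zero]
  | succ t ih =>
      rw [succ_nsmul, LkCC_add, ih]
      push_cast
      ring

lemma LkCC_finsum {n k : ℕ} {α : Type*} (C : Pt n → ℝ) (s : Finset α)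
    (G : α → Multiset (Box n)) :
    Lk k C C (∑ a ∈ s, G a) = ∑ a ∈ s, Lk k C C (G a) := by
  classical
  induction s using Finset.induction_on with
  | empty => simp [LkCC_zero]
  | @insert a s' ha ih =>
      rw [Finset.sum_insert ha, Finset.sum_insert ha, LkCC_add, ih]

end KIncr

open KIncr

set_option maxHeartbeats 1000000 in
/-- Proposition 5.5: the pointwise limit `C` of the sequence
obtained by lowering `B` is `k`-increasing on the mesh. -/
theorem stmt14 (n k : ℕ) (hn : 1 ≤ n) (hk1 : 1 ≤ k) (hkn : k ≤ n)
    (D : Set (Pt n)) (hD : IsMesh D)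
    (d : ℕ → Pt n) (hdinj : Function.Injective d) (hdrange : Set.range d = D)
    (A B : Pt n → ℝ)
    (hAI : ∀ u ∈ D, A u ∈ Set.Icc (0:ℝ) 1) (hBI : ∀ u ∈ D, B u ∈ Set.Icc (0:ℝ) 1)
    (hAB : ∀ u ∈ D, A u ≤ B u)
    (hL : ∀ DU : Multiset (Box n), memRk k D DU → 0 ≤ Lk k A B DU)
    (hvert : ∀ w : Pt n, isCubeVertex w → A w = B w)
    (Bs : ℕ → Pt n → ℝ) (hBs0 : Bs 0 = B)
    (hBsSucc : ∀ i : ℕ, ∀ u : Pt n,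
      Bs (i + 1) u = if u = d i then Bs i u - deltaK k D A (Bs i) (d i) else Bs i u)
    (C : Pt n → ℝ)
    (hC : ∀ u ∈ D, Filter.Tendsto (fun i => Bs i u) Filter.atTop (nhds (C u))) :
    ∀ DU : Multiset (Box n), memRk k D DU → 0 ≤ Lk k C C DU := by
  classical
  obtain ⟨δ, hδ, hDeq⟩ := hD
  have hDmem : ∀ u : Pt n, u ∈ D ↔ ∀ i, u i ∈ δ i := by
    intro u; rw [hDeq]; exact Iff.rfl
  have hdD : ∀ j, d j ∈ D := by
    intro j; rw [← hdrange]; exact Set.mem_range_self j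
  -- Step 1: induction invariant
  have claim1 : ∀ i : ℕ, (∀ u ∈ D, A u ≤ Bs i u) ∧
      (∀ E : Multiset (Box n), memRk k D E → 0 ≤ Lk k A (Bs i) E) := by
    intro i
    induction i with
    | zero => rw [hBs0]; exact ⟨hAB, hL⟩
    | succ i ih =>
        set x := d i with hxdef
        have hxD : x ∈ D := hdD i
        have hbdd : BddBelow {r : ℝ | ∃ DU : Multiset (Box n), memRk k D DU ∧
            0 < multDU k DU x ∧ r = Lk k A (Bs i) DU / |(multDU k DU x : ℝ)|} := by
          refine ⟨0, ?_⟩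
          rintro r ⟨E, hE, hm, rfl⟩
          exact div_nonneg (ih.2 E hE) (abs_nonneg _)
        have hPnn : 0 ≤ Ppos k D A (Bs i) x := by
          apply Real.sInf_nonneg
          rintro r ⟨E, hE, hm, rfl⟩
          exact div_nonneg (ih.2 E hE) (abs_nonneg _)
        have hδnn : 0 ≤ deltaK k D A (Bs i) x :=
          le_min hPnn (by linarith [ih.1 x hxD])
        have hδle : deltaK k D A (Bs i) x ≤ Bs i x - A x := min_le_right _ _
        constructor
        · intro u hu
          rw [hBsSucc i u]
          by_cases hux : u = x
          · rw [if_pos hux, hux]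
            linarith
          · rw [if_neg hux]
            exact ih.1 u hu
        · intro E hE
          have hupd := Lk_update (k := k) A (Bs i) (Bs (i+1)) E x
            (fun u hu => by rw [hBsSucc i u, if_neg hu])
          have hBx : Bs (i+1) x - Bs i x = - deltaK k D A (Bs i) x := by
            rw [hBsSucc i x, if_pos rfl]; ring
          rw [hupd, hBx]
          by_cases hm : 0 < multDU k E x
          · have hpp : pp (multDU k E x) = (multDU k E x : ℝ) := by
              rw [pp, max_eq_left]
              exact_mod_cast hm.le
            have hmem : Lk k A (Bs i) E / |(multDU k E x : ℝ)| ∈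
                {r : ℝ | ∃ DU : Multiset (Box n), memRk k D DU ∧
                  0 < multDU k DU x ∧ r = Lk k A (Bs i) DU / |(multDU k DU x : ℝ)|} :=
              ⟨E, hE, hm, rfl⟩
            have hinf : Ppos k D A (Bs i) x ≤ Lk k A (Bs i) E / |(multDU k E x : ℝ)| :=
              csInf_le hbdd hmem
            have hmr : (0:ℝ) < (multDU k E x : ℝ) := by exact_mod_cast hm
            have habs : |(multDU k E x : ℝ)| = (multDU k E x : ℝ) := abs_of_pos hmr
            rw [habs] at hinf
            have hδP : deltaK k D A (Bs i) x ≤ Ppos k D A (Bs i) x := min_le_left _ _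
            have h2 : deltaK k D A (Bs i) x * (multDU k E x : ℝ) ≤ Lk k A (Bs i) E := by
              have := mul_le_mul_of_nonneg_right (le_trans hδP hinf) hmr.le
              rwa [div_mul_cancel₀ _ (ne_of_gt hmr)] at this
            rw [hpp]
            nlinarith
          · have hpp : pp (multDU k E x) = 0 := by
              rw [pp, max_eq_right]
              exact_mod_cast (not_lt.1 hm)
            rw [hpp]
            have := ih.2 E hE
            linarith
  -- monotonicity and stabilization
  have hdec : ∀ i : ℕ, ∀ u ∈ D, Bs (i+1) u ≤ Bs i u := by
    intro i u hu
    rw [hBsSucc i u]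
    by_cases hux : u = d i
    · rw [if_pos hux]
      have hPnn : 0 ≤ Ppos k D A (Bs i) (d i) := by
        apply Real.sInf_nonneg
        rintro r ⟨E, hE, hm, rfl⟩
        exact div_nonneg ((claim1 i).2 E hE) (abs_nonneg _)
      have hδnn : 0 ≤ deltaK k D A (Bs i) (d i) :=
        le_min hPnn (by linarith [(claim1 i).1 (d i) (hdD i)])
      linarith
    · rw [if_neg hux]
  have hmono : ∀ i j : ℕ, i ≤ j → ∀ u ∈ D, Bs j u ≤ Bs i u := by
    intro i j hij u hu
    induction j, hij using Nat.le_induction with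
    | base => exact le_refl _
    | succ j hij ih => exact le_trans (hdec j u hu) ih
  have hstab : ∀ j i : ℕ, j + 1 ≤ i → Bs i (d j) = Bs (j+1) (d j) := by
    intro j i hji
    induction i, hji using Nat.le_induction with
    | base => rfl
    | succ i hji ih =>
        rw [hBsSucc i (d j), if_neg, ih]
        intro h
        exact absurd (hdinj h) (by omega)
  have hCval : ∀ j : ℕ, C (d j) = Bs (j+1) (d j) := by
    intro j
    have h1 : Filter.Tendsto (fun i => Bs i (d j)) Filter.atTop (nhds (Bs (j+1) (d j))) := by
      refine Filter.Tendsto.congr' ?_ tendsto_const_nhds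
      rw [Filter.EventuallyEq, Filter.eventually_atTop]
      exact ⟨j + 1, fun i hi => (hstab j i hi).symm⟩
    exact tendsto_nhds_unique (hC (d j) (hdD j)) h1
  have hCle : ∀ i : ℕ, ∀ u ∈ D, C u ≤ Bs i u := by
    intro i u hu
    obtain ⟨j, rfl⟩ : ∃ j, d j = u := by
      have : u ∈ Set.range d := by rw [hdrange]; exact hu
      exact this
    rw [hCval j]
    rcases le_or_gt i (j+1) with h | h
    · exact hmono i (j+1) h (d j) hu
    · rw [← hstab j i h.le]
  have hAC : ∀ u ∈ D, A u ≤ C u := by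
    intro u hu
    obtain ⟨j, rfl⟩ : ∃ j, d j = u := by
      have : u ∈ Set.range d := by rw [hdrange]; exact hu
      exact this
    rw [hCval j]
    exact (claim1 (j+1)).1 (d j) hu
  -- F1
  have F1 : ∀ E : Multiset (Box n), memRk k D E → 0 ≤ Lk k A C E := by
    intro E hE
    have hprem : ∀ u ∈ E.toFinset.biUnion Box.vertices, ∃ N, ∀ i, N ≤ i → Bs i u = C u := by
      intro u hu
      obtain ⟨j, rfl⟩ : ∃ j, d j = u := by
        have : u ∈ Set.range d := by rw [hdrange]; exact vertices_mem_D hE u hu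
        exact this
      exact ⟨j + 1, fun i hi => by rw [hstab j i hi, ← hCval j]⟩
    obtain ⟨N, hN⟩ := finset_exists_bound (E.toFinset.biUnion Box.vertices)
      (fun u i => Bs i u = C u) hprem
    rw [Lk_congr A C (Bs N) E (fun u hu => (hN u hu N (le_refl N)).symm)]
    exact (claim1 N).2 E hE
  -- F2
  have F2 : ∀ x ∈ D, A x < C x → ∀ ε : ℝ, 0 < ε →
      ∃ E : Multiset (Box n), memRk k D E ∧ 0 < multDU k E x ∧
        Lk k A C E ≤ ε * (multDU k E x : ℝ) := by
    intro x hxD hfx ε hε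
    obtain ⟨j, rfl⟩ : ∃ j, d j = x := by
      have : x ∈ Set.range d := by rw [hdrange]; exact hxD
      exact this
    set x := d j
    have hCx : C x = Bs j x - deltaK k D A (Bs j) x := by
      rw [hCval j, hBsSucc j x, if_pos rfl]
    -- the delta equals Ppos
    have hβ : deltaK k D A (Bs j) x < Bs j x - A x := by
      have : deltaK k D A (Bs j) x = Bs j x - C x := by linarith
      linarith
    have hPlt : Ppos k D A (Bs j) x < Bs j x - A x := by
      by_contra h
      push_neg at h
      rw [deltaK, min_eq_right h] at hβ
      exact lt_irrefl _ hβ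
    have hδP : deltaK k D A (Bs j) x = Ppos k D A (Bs j) x := by
      rw [deltaK, min_eq_left hPlt.le]
    -- x is not a cube vertex, so some coordinate is interior
    have hint : ∃ i₀ : Fin n, 0 < x i₀ ∧ x i₀ < 1 := by
      by_contra h
      push_neg at h
      have hcv : isCubeVertex x := by
        intro i
        have hI : x i ∈ Set.Icc (0:ℝ) 1 := (hδ i).1 ((hDmem x).1 hxD i)
        rcases lt_or_eq_of_le hI.1 with h0 | h0
        · right
          have := h i h0
          exact le_antisymm hI.2 this
        · left; exact h0.symm
      have hAB' : A x = B x := hvert x hcv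
      have : C x ≤ B x := by
        have := hCle 0 x hxD
        rwa [hBs0] at this
      linarith
    obtain ⟨i₀, h0, h1⟩ := hint
    -- a box giving positive multiplicity at x
    obtain ⟨R, hRk, hRvδ, hRm⟩ := exists_good_box hk1 hkn δ (fun i => (hδ i).1)
      (fun i => (hδ i).2.2.2.2.1) (fun i => (hδ i).2.2.2.2.2)
      x ((hDmem x).1 hxD) i₀ h0 h1
    have hRD : ∀ v ∈ R.vertices, v ∈ D := by
      intro v hv
      exact (hDmem v).2 (hRvδ v hv)
    have hE₀ : memRk k D ({R} : Multiset (Box n)) := by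
      intro R' hR'
      rw [Multiset.mem_singleton] at hR'
      subst hR'
      exact ⟨hRk, hRD⟩
    have hm₀ : multDU k ({R} : Multiset (Box n)) x = 1 := by
      rw [multDU]
      simp [hRm]
    -- nonemptiness of the Ppos set
    set S := {r : ℝ | ∃ DU : Multiset (Box n), memRk k D DU ∧
        0 < multDU k DU x ∧ r = Lk k A (Bs j) DU / |(multDU k DU x : ℝ)|} with hS
    have hSne : S.Nonempty :=
      ⟨_, ⟨{R}, hE₀, by rw [hm₀]; norm_num, rfl⟩⟩
    have hPS : Ppos k D A (Bs j) x = sInf S := rfl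
    have hlt : sInf S < Ppos k D A (Bs j) x + ε := by
      rw [← hPS]; linarith
    obtain ⟨r, hrS, hrlt⟩ := exists_lt_of_csInf_lt hSne hlt
    obtain ⟨E, hE, hm, rfl⟩ := hrS
    have hmr : (0:ℝ) < (multDU k E x : ℝ) := by exact_mod_cast hm
    have habs : |(multDU k E x : ℝ)| = (multDU k E x : ℝ) := abs_of_pos hmr
    rw [habs] at hrlt
    have hLkE : Lk k A (Bs j) E < (Ppos k D A (Bs j) x + ε) * (multDU k E x : ℝ) := by
      rw [← div_lt_iff₀ hmr] at *
      exact hrlt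
    have hupd := Lk_update (k := k) A (Bs j) (Bs (j+1)) E x
      (fun u hu => by rw [hBsSucc j u, if_neg hu])
    have hBx : Bs (j+1) x - Bs j x = - deltaK k D A (Bs j) x := by
      rw [hBsSucc j x, if_pos rfl]; ring
    have hpp : pp (multDU k E x) = (multDU k E x : ℝ) := by
      rw [pp, max_eq_left]
      exact_mod_cast hm.le
    have hLk1 : Lk k A (Bs (j+1)) E < ε * (multDU k E x : ℝ) := by
      rw [hupd, hBx, hpp, hδP]
      nlinarith
    have hLk2 : Lk k A C E ≤ Lk k A (Bs (j+1)) E := by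
      apply Lk_mono
      intro u hu
      exact hCle (j+1) u (vertices_mem_D hE u hu)
    exact ⟨E, hE, hm, by linarith⟩
  -- Final combination argument
  intro DU₀ hDU₀
  by_contra hneg
  push_neg at hneg
  set m₀ : Pt n → ℤ := fun u => multDU k DU₀ u with hm₀def
  set V₀ : Finset (Pt n) := DU₀.toFinset.biUnion Box.vertices with hV₀def
  have hV₀D : ∀ u ∈ V₀, u ∈ D := vertices_mem_D hDU₀
  set N : Finset (Pt n) := V₀.filter (fun u => m₀ u < 0 ∧ A u < C u) with hNdef
  have hND : ∀ u ∈ N, u ∈ D := fun u hu => hV₀D u (Finset.mem_of_mem_filter u hu)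
  set a : ℝ := - Lk k C C DU₀ with hadef
  have ha0 : 0 < a := by rw [hadef]; linarith
  rcases Finset.eq_empty_or_nonempty N with hNe | hNe
  · -- no bad points: Lk A C DU₀ = Lk C C DU₀ ≥ 0, contradiction
    have hz : ∀ u ∈ V₀, np (multDU k DU₀ u) * (C u - A u) = 0 := by
      intro u hu
      by_cases h1 : multDU k DU₀ u < 0
      · have h2 : ¬ A u < C u := by
          intro h2
          have : u ∈ N := Finset.mem_filter.2 ⟨hu, h1, h2⟩
          rw [hNe] at this
          exact absurd this (Finset.notMem_empty u)
        have h3 : C u - A u = 0 := by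
          have := hAC u (hV₀D u hu)
          have := not_lt.1 h2
          linarith
        rw [h3, mul_zero]
      · rw [np_of_nonneg (not_lt.1 h1), zero_mul]
    have hsp := Lk_split (k := k) A C DU₀ V₀ (le_refl _)
    rw [Finset.sum_eq_zero hz, add_zero] at hsp
    have := F1 DU₀ hDU₀
    linarith
  · -- bad points exist
    have hqN : ∀ u ∈ N, m₀ u < 0 ∧ A u < C u := fun u hu => (Finset.mem_filter.1 hu).2
    set Qr : ℝ := ∑ u ∈ N, (-(m₀ u : ℝ)) with hQrdef
    have hQr1 : 1 ≤ Qr := by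
      have h1 : ∀ u ∈ N, (1:ℝ) ≤ -(m₀ u : ℝ) := by
        intro u hu
        have := (hqN u hu).1
        have : (m₀ u : ℝ) ≤ -1 := by exact_mod_cast (by omega : m₀ u ≤ -1)
        linarith
      have h2 := Finset.sum_le_sum h1
      rw [Finset.sum_const, nsmul_eq_mul, mul_one] at h2
      have h3 : 0 < N.card := Finset.card_pos.2 hNe
      have h4 : (1:ℝ) ≤ (N.card : ℝ) := by exact_mod_cast h3
      rw [hQrdef]
      linarith
    set ε : ℝ := a / (2 * Qr) with hεdef
    have hε : 0 < ε := div_pos ha0 (by linarith)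
    have hch : ∀ u : Pt n, ∃ E : Multiset (Box n), u ∈ N →
        memRk k D E ∧ 0 < multDU k E u ∧ Lk k A C E ≤ ε * (multDU k E u : ℝ) := by
      intro u
      by_cases hu : u ∈ N
      · obtain ⟨E, h⟩ := F2 u (hND u hu) (hqN u hu).2 ε hε
        exact ⟨E, fun _ => h⟩
      · exact ⟨0, fun h => absurd h hu⟩
    choose E hE using hch
    have hEmem : ∀ u ∈ N, memRk k D (E u) := fun u hu => (hE u hu).1
    have hEpos : ∀ u ∈ N, 0 < multDU k (E u) u := fun u hu => (hE u hu).2.1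
    have hELk : ∀ u ∈ N, Lk k A C (E u) ≤ ε * (multDU k (E u) u : ℝ) :=
      fun u hu => (hE u hu).2.2
    set c : ℝ := ε * ∑ u ∈ N, (multDU k (E u) u : ℝ) with hcdef
    have hc0 : 0 < c := by
      refine mul_pos hε (Finset.sum_pos ?_ hNe)
      intro u hu
      exact_mod_cast hEpos u hu
    obtain ⟨M, hM⟩ := exists_nat_gt (2 * c / a)
    have hM0 : 0 < M := by
      have h1 : (0:ℝ) < 2 * c / a := div_pos (by linarith) ha0
      have h2 : (0:ℝ) < (M:ℝ) := lt_trans h1 hM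
      exact_mod_cast h2
    set t : Pt n → ℕ := fun u =>
      (M * (-(m₀ u)).toNat + (multDU k (E u) u).toNat - 1) / (multDU k (E u) u).toNat
      with htdef
    have htfact : ∀ u ∈ N, M * (-(m₀ u)).toNat ≤ t u * (multDU k (E u) u).toNat ∧
        t u * (multDU k (E u) u).toNat ≤ M * (-(m₀ u)).toNat + (multDU k (E u) u).toNat := by
      intro u hu
      have hmpos := hEpos u hu
      set b := (multDU k (E u) u).toNat with hb
      have hb1 : 1 ≤ b := by omega
      set X := M * (-(m₀ u)).toNat + b - 1 with hX
      have ht : t u = X / b := rfl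
      have hdm := Nat.div_add_mod' X b
      have hmlt : X % b < b := Nat.mod_lt _ (by omega)
      rw [ht]
      omega
    have hcast1 : ∀ u ∈ N, ((-(m₀ u)).toNat : ℝ) = -(m₀ u : ℝ) := by
      intro u hu
      have h := (hqN u hu).1
      have : (((-(m₀ u)).toNat : ℤ)) = -(m₀ u) := Int.toNat_of_nonneg (by omega)
      exact_mod_cast this
    have hcast2 : ∀ u ∈ N, (((multDU k (E u) u).toNat : ℕ) : ℝ) = (multDU k (E u) u : ℝ) := by
      intro u hu
      have h := hEpos u hu
      have : (((multDU k (E u) u).toNat : ℤ)) = multDU k (E u) u :=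
        Int.toNat_of_nonneg (by omega)
      exact_mod_cast this
    have htr1 : ∀ u ∈ N, (M:ℝ) * (-(m₀ u : ℝ)) ≤ (t u : ℝ) * (multDU k (E u) u : ℝ) := by
      intro u hu
      have h := (htfact u hu).1
      have h' : ((M * (-(m₀ u)).toNat : ℕ) : ℝ) ≤ ((t u * (multDU k (E u) u).toNat : ℕ) : ℝ) := by
        exact_mod_cast h
      push_cast at h'
      rw [hcast1 u hu, hcast2 u hu] at h'
      exact h'
    have htr2 : ∀ u ∈ N, (t u:ℝ) * (multDU k (E u) u : ℝ)
        ≤ (M:ℝ) * (-(m₀ u : ℝ)) + (multDU k (E u) u : ℝ) := by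
      intro u hu
      have h := (htfact u hu).2
      have h' : ((t u * (multDU k (E u) u).toNat : ℕ) : ℝ)
          ≤ ((M * (-(m₀ u)).toNat + (multDU k (E u) u).toNat : ℕ) : ℝ) := by
        exact_mod_cast h
      push_cast at h'
      rw [hcast1 u hu, hcast2 u hu] at h'
      exact h'
    -- the big multiset
    set DU : Multiset (Box n) := (M • DU₀) + ∑ u ∈ N, (t u) • E u with hDUdef
    have hDUmem : memRk k D DU :=
      memRk_add (memRk_nsmul M hDU₀)
        (memRk_finsum N _ (fun u hu => memRk_nsmul (t u) (hEmem u hu)))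
    set s : Finset (Pt n) :=
      V₀ ∪ N.biUnion (fun u => (E u).toFinset.biUnion Box.vertices) with hsdef
    have hsub0 : DU₀.toFinset.biUnion Box.vertices ⊆ s := Finset.subset_union_left
    have hsubE : ∀ v ∈ N, (E v).toFinset.biUnion Box.vertices ⊆ s := by
      intro v hv
      rw [hsdef]
      exact (Finset.subset_biUnion_of_mem
        (fun u => (E u).toFinset.biUnion Box.vertices) hv).trans
        Finset.subset_union_right
    have hsD : ∀ u ∈ s, u ∈ D := by
      intro u hu
      rcases Finset.mem_union.1 hu with h | h
      · exact hV₀D u h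
      · rcases Finset.mem_biUnion.1 h with ⟨v, hv, h'⟩
        exact vertices_mem_D (hEmem v hv) u h'
    have hsubDU : DU.toFinset.biUnion Box.vertices ⊆ s := by
      intro u hu
      rcases Finset.mem_biUnion.1 hu with ⟨R, hR, huR⟩
      rw [Multiset.mem_toFinset, hDUdef] at hR
      rcases Multiset.mem_add.1 hR with h | h
      · have hR0 : R ∈ DU₀ := (Multiset.mem_nsmul.1 h).2
        exact hsub0 (Finset.mem_biUnion.2 ⟨R, Multiset.mem_toFinset.2 hR0, huR⟩)
      · rcases Multiset.mem_sum.1 h with ⟨v, hv, hRv⟩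
        have hR0 : R ∈ E v := (Multiset.mem_nsmul.1 hRv).2
        exact hsubE v hv (Finset.mem_biUnion.2 ⟨R, Multiset.mem_toFinset.2 hR0, huR⟩)
    have hmDU : ∀ u : Pt n, multDU k DU u
        = M * m₀ u + ∑ v ∈ N, (t v : ℤ) * multDU k (E v) u := by
      intro u
      rw [hDUdef, multDU_add, multDU_nsmul, multDU_finsum]
      congr 1
      exact Finset.sum_congr rfl (fun v _ => multDU_nsmul k (t v) (E v) u)
    -- pointwise bound on the negative parts
    have h5 : ∀ u ∈ s, np (multDU k DU u) * (C u - A u)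
        ≤ ∑ v ∈ N, (t v : ℝ) * (np (multDU k (E v) u) * (C u - A u)) := by
      intro u hu
      have hFnn : 0 ≤ C u - A u := by
        have := hAC u (hsD u hu); linarith
      by_cases hF : C u - A u = 0
      · rw [hF]
        simp
      · have hnp : np (multDU k DU u) ≤ ∑ v ∈ N, (t v : ℝ) * np (multDU k (E v) u) := by
          refine np_le ?_ ?_
          · have hcast : ((multDU k DU u : ℤ) : ℝ)
                = (M:ℝ) * (m₀ u : ℝ) + ∑ v ∈ N, (t v:ℝ) * (multDU k (E v) u : ℝ) := by
              rw [hmDU u]; push_cast; ring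
            rw [hcast]
            by_cases hm0 : 0 ≤ m₀ u
            · have hterm : ∀ v ∈ N, -((t v:ℝ) * (multDU k (E v) u : ℝ))
                  ≤ (t v:ℝ) * np (multDU k (E v) u) := by
                intro v hv
                have h1 := neg_le_np (multDU k (E v) u)
                have htv : (0:ℝ) ≤ (t v : ℝ) := Nat.cast_nonneg _
                nlinarith
              have hsum := Finset.sum_le_sum hterm
              rw [Finset.sum_neg_distrib] at hsum
              have hm0r : 0 ≤ (M:ℝ) * (m₀ u : ℝ) :=
                mul_nonneg (Nat.cast_nonneg _) (by exact_mod_cast hm0)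
              linarith
            · push_neg at hm0
              have huV : u ∈ V₀ := by
                by_contra h
                have := multDU_eq_zero (k := k) (DU := DU₀) (u := u) h
                rw [hm₀def] at hm0
                simp only at hm0
                omega
              have huN : u ∈ N := Finset.mem_filter.2 ⟨huV, hm0, by
                have := hAC u (hsD u hu)
                rcases lt_or_eq_of_le this with h' | h'
                · exact h'
                · exact absurd h'.symm (by intro hh; exact hF (by rw [hh]; ring))⟩
              have hsplit : ∑ v ∈ N, (t v:ℝ) * (multDU k (E v) u : ℝ)
                  = (t u:ℝ) * (multDU k (E u) u : ℝ)
                    + ∑ v ∈ N.erase u, (t v:ℝ) * (multDU k (E v) u : ℝ) :=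
                (Finset.add_sum_erase N _ huN).symm
              have hkey : 0 ≤ (M:ℝ) * (m₀ u:ℝ) + (t u:ℝ) * (multDU k (E u) u : ℝ) := by
                have := htr1 u huN
                linarith
              have hterm : ∀ v ∈ N.erase u, -((t v:ℝ) * (multDU k (E v) u : ℝ))
                  ≤ (t v:ℝ) * np (multDU k (E v) u) := by
                intro v hv
                have h1 := neg_le_np (multDU k (E v) u)
                have htv : (0:ℝ) ≤ (t v : ℝ) := Nat.cast_nonneg _
                nlinarith
              have hsum := Finset.sum_le_sum hterm
              rw [Finset.sum_neg_distrib] at hsum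
              have hmono2 : ∑ v ∈ N.erase u, (t v:ℝ) * np (multDU k (E v) u)
                  ≤ ∑ v ∈ N, (t v:ℝ) * np (multDU k (E v) u) :=
                Finset.sum_le_sum_of_subset_of_nonneg (Finset.erase_subset _ _)
                  (fun v _ _ => mul_nonneg (Nat.cast_nonneg _) (np_nonneg _))
              rw [hsplit]
              linarith
          · exact Finset.sum_nonneg
              (fun v _ => mul_nonneg (Nat.cast_nonneg _) (np_nonneg _))
        calc np (multDU k DU u) * (C u - A u)
            ≤ (∑ v ∈ N, (t v:ℝ) * np (multDU k (E v) u)) * (C u - A u) :=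
              mul_le_mul_of_nonneg_right hnp hFnn
          _ = ∑ v ∈ N, (t v:ℝ) * (np (multDU k (E v) u) * (C u - A u)) := by
              rw [Finset.sum_mul]
              exact Finset.sum_congr rfl (fun v _ => by ring)
    have h6 : ∑ u ∈ s, np (multDU k DU u) * (C u - A u)
        ≤ ∑ v ∈ N, (t v:ℝ) * (∑ u ∈ s, np (multDU k (E v) u) * (C u - A u)) := by
      calc ∑ u ∈ s, np (multDU k DU u) * (C u - A u)
          ≤ ∑ u ∈ s, ∑ v ∈ N, (t v:ℝ) * (np (multDU k (E v) u) * (C u - A u)) :=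
            Finset.sum_le_sum h5
        _ = ∑ v ∈ N, ∑ u ∈ s, (t v:ℝ) * (np (multDU k (E v) u) * (C u - A u)) :=
            Finset.sum_comm
        _ = ∑ v ∈ N, (t v:ℝ) * (∑ u ∈ s, np (multDU k (E v) u) * (C u - A u)) := by
            exact Finset.sum_congr rfl (fun v _ => (Finset.mul_sum _ _ _).symm)
    -- the chain of (in)equalities
    have hA1 : 0 ≤ Lk k A C DU := F1 DU hDUmem
    have hA2 : Lk k A C DU
        = Lk k C C DU + ∑ u ∈ s, np (multDU k DU u) * (C u - A u) :=
      Lk_split A C DU s hsubDU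
    have hA3 : Lk k C C DU
        = (M:ℝ) * Lk k C C DU₀ + ∑ v ∈ N, (t v:ℝ) * Lk k C C (E v) := by
      rw [hDUdef, LkCC_add, LkCC_nsmul, LkCC_finsum]
      congr 1
      exact Finset.sum_congr rfl (fun v _ => LkCC_nsmul C (t v) (E v))
    have hA5 : ∑ v ∈ N, (t v:ℝ) * Lk k C C (E v)
        = ∑ v ∈ N, (t v:ℝ) * Lk k A C (E v)
          - ∑ v ∈ N, (t v:ℝ) * (∑ u ∈ s, np (multDU k (E v) u) * (C u - A u)) := by
      rw [← Finset.sum_sub_distrib]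
      refine Finset.sum_congr rfl ?_
      intro v hv
      have := Lk_split (k := k) A C (E v) s (hsubE v hv)
      have h' : Lk k C C (E v)
          = Lk k A C (E v) - ∑ u ∈ s, np (multDU k (E v) u) * (C u - A u) := by
        linarith
      rw [h']
      ring
    have hA6 : 0 ≤ (M:ℝ) * (- a) + ∑ v ∈ N, (t v:ℝ) * Lk k A C (E v) := by
      have h := hA1
      rw [hA2, hA3, hA5] at h
      have haeq : Lk k C C DU₀ = -a := by rw [hadef]; ring
      rw [haeq] at h
      linarith [h6]
    have hA7 : ∑ v ∈ N, (t v:ℝ) * Lk k A C (E v) ≤ ε * (M:ℝ) * Qr + c := by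
      have hterm : ∀ v ∈ N, (t v:ℝ) * Lk k A C (E v)
          ≤ ε * ((M:ℝ) * (-(m₀ v:ℝ)) + (multDU k (E v) v : ℝ)) := by
        intro v hv
        have h1 : (t v:ℝ) * Lk k A C (E v) ≤ (t v:ℝ) * (ε * (multDU k (E v) v : ℝ)) :=
          mul_le_mul_of_nonneg_left (hELk v hv) (Nat.cast_nonneg _)
        have h2 := htr2 v hv
        calc (t v:ℝ) * Lk k A C (E v)
            ≤ (t v:ℝ) * (ε * (multDU k (E v) v : ℝ)) := h1
          _ = ε * ((t v:ℝ) * (multDU k (E v) v : ℝ)) := by ring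
          _ ≤ ε * ((M:ℝ) * (-(m₀ v:ℝ)) + (multDU k (E v) v : ℝ)) :=
              mul_le_mul_of_nonneg_left h2 hε.le
      calc ∑ v ∈ N, (t v:ℝ) * Lk k A C (E v)
          ≤ ∑ v ∈ N, ε * ((M:ℝ) * (-(m₀ v:ℝ)) + (multDU k (E v) v : ℝ)) :=
            Finset.sum_le_sum hterm
        _ = ε * (M:ℝ) * Qr + c := by
            rw [hQrdef, hcdef, Finset.mul_sum, Finset.mul_sum, ← Finset.sum_add_distrib]
            refine Finset.sum_congr rfl ?_
            intro v _
            ring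
    have hQε : ε * Qr = a / 2 := by
      rw [hεdef]
      field_simp
    have hfin : (M:ℝ) * a / 2 ≤ c := by
      have h1 : ε * (M:ℝ) * Qr = (M:ℝ) * (ε * Qr) := by ring
      rw [h1, hQε] at hA7
      linarith
    have hMle : (M:ℝ) * a ≤ 2 * c := by
      have h2 : (M:ℝ) * a = 2 * ((M:ℝ) * a / 2) := by ring
      rw [h2]
      nlinarith [hfin]
    have hMle' : (M:ℝ) ≤ 2 * c / a := by
      rw [le_div_iff₀ ha0]
      exact hMle
    linarith
end

section
/- Let A, B : I^n → I be semicopulas with A ≤ B and fix an integer k with 2 ≤ k ≤ n. Let D ⊆ I^n be a dense countably infinite mesh and let C : D → I be a k-increasing function on D such that A(d) ≤ C(d) ≤ B(d) for all d ∈ D. Then there exists a k-increasing function C' : I^n → I such that C'(d) = C(d) for all d ∈ D and A(x) ≤ C'(x) ≤ B(x) for all x ∈ I^n. -/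
open scoped Classical BigOperators

namespace Stmt16Aux
open KIncr Finset

variable {n : ℕ}

def corner (lo hi : Pt n) (T : Finset (Fin n)) : Pt n := fun i => if i ∈ T then hi i else lo i

noncomputable def mdiff (f : Pt n → ℝ) (lo hi : Pt n) (S : Finset (Fin n)) : ℝ :=
  ∑ T ∈ S.powerset, (-1 : ℝ) ^ (S.card - T.card) * f (corner lo hi T)

lemma corner_insert (lo hi : Pt n) (t : Fin n) (T : Finset (Fin n)) (ht : t ∉ T) :
    corner lo hi (insert t T) = corner (Function.update lo t (hi t)) hi T := by
  funext i
  by_cases h : i = t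
  · subst h; simp [corner, ht]
  · simp [corner, h, Function.update_of_ne h, Finset.mem_insert]

lemma mdiff_insert (f : Pt n → ℝ) (lo hi : Pt n) (S : Finset (Fin n)) (t : Fin n) (ht : t ∉ S) :
    mdiff f lo hi (insert t S)
      = mdiff f (Function.update lo t (hi t)) hi S - mdiff f lo hi S := by
  unfold mdiff
  rw [Finset.sum_powerset_insert ht, Finset.card_insert_of_notMem ht]
  have h1 : ∀ T ∈ S.powerset, (-1:ℝ) ^ (S.card + 1 - T.card) * f (corner lo hi T)
      = -((-1:ℝ) ^ (S.card - T.card) * f (corner lo hi T)) := by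
    intro T hT
    have hc : T.card ≤ S.card := Finset.card_le_card (Finset.mem_powerset.1 hT)
    have he : S.card + 1 - T.card = (S.card - T.card) + 1 := by omega
    rw [he, pow_succ]; ring
  have h2 : ∀ T ∈ S.powerset,
      (-1:ℝ) ^ (S.card + 1 - (insert t T).card) * f (corner lo hi (insert t T))
      = (-1:ℝ) ^ (S.card - T.card) * f (corner (Function.update lo t (hi t)) hi T) := by
    intro T hT
    have hT' : T ⊆ S := Finset.mem_powerset.1 hT
    have htT : t ∉ T := fun h => ht (hT' h)
    have hc : T.card ≤ S.card := Finset.card_le_card hT'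
    rw [Finset.card_insert_of_notMem htT, corner_insert lo hi t T htT]
    congr 2
    omega
  rw [Finset.sum_congr rfl h1, Finset.sum_congr rfl h2, Finset.sum_neg_distrib]
  ring

lemma mdiff_degen (f : Pt n → ℝ) (lo hi : Pt n) (S : Finset (Fin n)) (t : Fin n)
    (ht : t ∈ S) (h : lo t = hi t) : mdiff f lo hi S = 0 := by
  have h1 : S = insert t (S.erase t) := (Finset.insert_erase ht).symm
  rw [h1, mdiff_insert f lo hi _ t (Finset.notMem_erase t S), ← h, Function.update_eq_self]
  ring

lemma vvol_eq_mdiff (k : ℕ) (f : Pt n → ℝ) (R : Box n) (hle : ∀ i, R.lo i ≤ R.hi i)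
    (S : Finset (Fin n)) (hS : ∀ i, i ∈ S ↔ R.lo i < R.hi i) (hcard : S.card = k) :
    Vvol k f R = mdiff f R.lo R.hi S := by
  have hkn : k ≤ n := by
    rw [← hcard]
    simpa using Finset.card_le_univ S
  have himg : R.vertices = S.powerset.image (corner R.lo R.hi) := by
    ext v
    simp only [Box.vertices, Finset.mem_image, Finset.mem_univ, true_and, Finset.mem_powerset]
    constructor
    · rintro ⟨ε, rfl⟩
      refine ⟨S.filter (fun i => ε i = true), Finset.filter_subset _ _, ?_⟩
      funext i
      by_cases hiS : i ∈ S
      · by_cases hε : ε i <;> simp [corner, hiS, hε]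
      · have hd : R.lo i = R.hi i :=
          le_antisymm (hle i) (not_lt.1 (fun h => hiS ((hS i).2 h)))
        by_cases hε : ε i <;> simp [corner, hiS, hε, hd]
    · rintro ⟨T, _, rfl⟩
      exact ⟨fun i => decide (i ∈ T), by funext i; by_cases h : i ∈ T <;> simp [corner, h]⟩
  have hinj : ∀ T₁ ∈ S.powerset, ∀ T₂ ∈ S.powerset,
      corner R.lo R.hi T₁ = corner R.lo R.hi T₂ → T₁ = T₂ := by
    intro T₁ h₁ T₂ h₂ hc
    have h₁' := Finset.mem_powerset.1 h₁
    have h₂' := Finset.mem_powerset.1 h₂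
    ext i
    by_cases hiS : i ∈ S
    · have hlt : R.lo i < R.hi i := (hS i).1 hiS
      have := congrFun hc i
      by_cases hi1 : i ∈ T₁ <;> by_cases hi2 : i ∈ T₂ <;>
        simp only [corner, hi1, hi2, if_true, if_false] at this ⊢ <;>
        first
          | tauto
          | (exact absurd this (ne_of_gt hlt))
          | (exact absurd this (ne_of_lt hlt))
    · constructor
      · intro hi1; exact absurd (h₁' hi1) hiS
      · intro hi2; exact absurd (h₂' hi2) hiS
  rw [Vvol, himg, Finset.sum_image hinj]
  apply Finset.sum_congr rfl
  intro T hT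
  have hT' : T ⊆ S := Finset.mem_powerset.1 hT
  have hTc : T.card ≤ k := hcard ▸ Finset.card_le_card hT'
  have hfil : Finset.univ.filter (fun i => corner R.lo R.hi T i = R.lo i) = Tᶜ := by
    ext i
    simp only [Finset.mem_filter, Finset.mem_univ, true_and, Finset.mem_compl]
    by_cases hi : i ∈ T
    · have hlt : R.lo i < R.hi i := (hS i).1 (hT' hi)
      simp [corner, hi, (ne_of_gt hlt)]
    · simp [corner, hi]
  have hsign : (R.sign k (corner R.lo R.hi T) : ℝ) = (-1:ℝ) ^ (S.card - T.card) := by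
    rw [Box.sign, hfil]
    have hcc : (Tᶜ : Finset (Fin n)).card = n - T.card := by
      rw [Finset.card_compl]; simp
    rw [hcc]
    push_cast
    have he : n - T.card + (n - k) = (S.card - T.card) + 2 * (n - k) := by omega
    rw [he, pow_add, pow_mul, neg_one_sq, one_pow, mul_one]
  rw [hsign]

lemma mdiff_empty (f : Pt n → ℝ) (lo hi : Pt n) : mdiff f lo hi ∅ = f lo := by
  have hc : corner lo hi ∅ = lo := by funext i; simp [corner]
  simp [mdiff, hc]

lemma mdiff_singleton (f : Pt n → ℝ) (lo hi : Pt n) (i : Fin n) :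
    mdiff f lo hi {i} = f (Function.update lo i (hi i)) - f lo := by
  have h : ({i} : Finset (Fin n)) = insert i (∅ : Finset (Fin n)) := by simp
  rw [h, mdiff_insert _ _ _ _ _ (Finset.notMem_empty i), mdiff_empty, mdiff_empty]

/-- the point `z` with coordinates in `U` raised to `1`. -/
def maskf (z : Pt n) (U : Finset (Fin n)) : Pt n := fun j => if j ∈ U then (1:ℝ) else z j

def HProp (δ : Fin n → Set ℝ) (C : Pt n → ℝ) (j : ℕ) : Prop :=
  ∀ lo hi : Pt n, (∀ i, lo i ∈ δ i) → (∀ i, hi i ∈ δ i) → (∀ i, lo i ≤ hi i) →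
  ∀ S : Finset (Fin n), S.card = j → (∀ i, i ∉ S → lo i = hi i) → 0 ≤ mdiff C lo hi S

end Stmt16Aux

open KIncr
/-- Proposition 6.2: extension of `C` from the mesh to the
unit cube for semicopula bounds, `k ≥ 2`. -/
theorem stmt16 (n k : ℕ) (hn : 1 ≤ n) (hk2 : 2 ≤ k) (hkn : k ≤ n)
    (A B : Pt n → ℝ) (hA : Semicopula A) (hB : Semicopula B)
    (hAI : MapsToI A) (hBI : MapsToI B)
    (hAB : ∀ x : Pt n, inCube x → A x ≤ B x)
    (D : Set (Pt n)) (hD : IsMesh D)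
    (C : Pt n → ℝ) (hCI : ∀ d ∈ D, C d ∈ Set.Icc (0:ℝ) 1)
    (hCincr : KIncreasingOn k D C)
    (hCsand : ∀ d ∈ D, A d ≤ C d ∧ C d ≤ B d) :
    ∃ C' : Pt n → ℝ, KIncreasingOn k (cubeSet n) C' ∧
      (∀ d ∈ D, C' d = C d) ∧
      (∀ x : Pt n, inCube x → A x ≤ C' x ∧ C' x ≤ B x) := by
  classical
  obtain ⟨δ, hδ, hDeq⟩ := hD
  have hδI : ∀ i, δ i ⊆ Set.Icc (0:ℝ) 1 := fun i => (hδ i).1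
  have hδdense : ∀ i, Set.Icc (0:ℝ) 1 ⊆ closure (δ i) := fun i => (hδ i).2.2.2.1
  have hδ0 : ∀ i, (0:ℝ) ∈ δ i := fun i => (hδ i).2.2.2.2.1
  have hδ1 : ∀ i, (1:ℝ) ∈ δ i := fun i => (hδ i).2.2.2.2.2
  have hmemD : ∀ x : Pt n, (∀ i, x i ∈ δ i) → x ∈ D := fun x hx => by rw [hDeq]; exact hx
  have hcube : ∀ x : Pt n, (∀ i, x i ∈ δ i) → inCube x := fun x hx i => hδI i (hx i)
  have hnR : (0:ℝ) < n := by exact_mod_cast hn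
  -- C is grounded on the mesh
  have hCg : ∀ x : Pt n, (∀ i, x i ∈ δ i) → (∃ i, x i = 0) → C x = 0 := by
    intro x hx hex
    have hxc := hcube x hx
    have h1 := hA.1 x hxc hex
    have h2 := hB.1 x hxc hex
    have h3 := hCsand x (hmemD x hx)
    linarith [h3.1, h3.2]
  -- C has uniform marginals on the mesh
  have hCmarg : ∀ (i : Fin n) (t : ℝ), t ∈ δ i →
      C (Function.update (fun _ => (1:ℝ)) i t) = t := by
    intro i t ht
    have hmem : ∀ j, (Function.update (fun _ => (1:ℝ)) i t) j ∈ δ j := by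
      intro j; by_cases h : j = i
      · subst h; simp [ht]
      · simp [Function.update_of_ne h, hδ1 j]
    have htI : t ∈ Set.Icc (0:ℝ) 1 := hδI i ht
    have h1 := hA.2.2 i t htI
    have h2 := hB.2.2 i t htI
    have h3 := hCsand _ (hmemD _ hmem)
    linarith [h3.1, h3.2]
  -- base case: HProp k
  have Hk : Stmt16Aux.HProp δ C k := by
    intro lo hi hlo hhi hle S hcard heq
    by_cases hdeg : ∃ i ∈ S, lo i = hi i
    · obtain ⟨t, ht, hteq⟩ := hdeg
      rw [Stmt16Aux.mdiff_degen C lo hi S t ht hteq]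
    · push_neg at hdeg
      set R : Box n := ⟨lo, hi⟩ with hRdef
      have hSiff : ∀ i, i ∈ S ↔ lo i < hi i := by
        intro i
        constructor
        · intro hi'; exact lt_of_le_of_ne (hle i) (hdeg i hi')
        · intro h; by_contra hns; exact absurd (heq i hns) (ne_of_lt h)
      have hbox : R.IsKBox k := by
        refine ⟨hcube lo hlo, hcube hi hhi, hle, ?_⟩
        rw [← hcard]
        congr 1
        ext i
        simp [hSiff i, hRdef]
      have hverts : ∀ v ∈ R.vertices, v ∈ D := by
        intro v hv
        simp only [Box.vertices, Finset.mem_image, Finset.mem_univ, true_and] at hv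
        obtain ⟨ε, rfl⟩ := hv
        apply hmemD
        intro i
        by_cases h : ε i <;> simp [h, hlo i, hhi i, hRdef]
      have hvv := hCincr R hbox hverts
      rwa [Stmt16Aux.vvol_eq_mdiff k C R hle S hSiff hcard] at hvv
  -- downward step
  have Hstep : ∀ j : ℕ, 1 ≤ j → j < k → Stmt16Aux.HProp δ C (j+1) → Stmt16Aux.HProp δ C j := by
    intro j hj1 hjk hH lo hi hlo hhi hle S hcard heq
    have hjn : j < n := lt_of_lt_of_le hjk hkn
    have hex : ∃ t, t ∉ S := by
      by_contra hc
      push_neg at hc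
      have hu : S = Finset.univ := Finset.eq_univ_iff_forall.2 hc
      rw [hu, Finset.card_univ] at hcard
      simp at hcard
      omega
    obtain ⟨t, htS⟩ := hex
    set L : Pt n := Function.update lo t 0 with hL
    have hupd : Function.update L t (hi t) = lo := by
      funext i
      by_cases h : i = t
      · subst h; rw [Function.update_self]; exact (heq i htS).symm
      · rw [Function.update_of_ne h, hL, Function.update_of_ne h]
    have hrec := Stmt16Aux.mdiff_insert C L hi S t htS
    rw [hupd] at hrec
    have hLmesh : ∀ i, L i ∈ δ i := by
      intro i
      by_cases h : i = t
      · subst h; rw [hL, Function.update_self]; exact hδ0 i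
      · rw [hL, Function.update_of_ne h]; exact hlo i
    have hzero : Stmt16Aux.mdiff C L hi S = 0 := by
      unfold Stmt16Aux.mdiff
      apply Finset.sum_eq_zero
      intro T hT
      have hTS : T ⊆ S := Finset.mem_powerset.1 hT
      have htT : t ∉ T := fun h => htS (hTS h)
      have hcz : C (Stmt16Aux.corner L hi T) = 0 := by
        apply hCg
        · intro i
          by_cases h : i ∈ T
          · simp [Stmt16Aux.corner, h, hhi i]
          · simp [Stmt16Aux.corner, h, hLmesh i]
        · refine ⟨t, ?_⟩
          simp [Stmt16Aux.corner, htT, hL]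
      rw [hcz]; ring
    have happ : 0 ≤ Stmt16Aux.mdiff C L hi (insert t S) := by
      apply hH L hi hLmesh hhi
      · intro i
        by_cases h : i = t
        · subst h; rw [hL, Function.update_self]; exact (hδI i (hhi i)).1
        · rw [hL, Function.update_of_ne h]; exact hle i
      · rw [Finset.card_insert_of_notMem htS, hcard]
      · intro i hi'
        have h1 : i ≠ t := fun h => hi' (h ▸ Finset.mem_insert_self t S)
        have h2 : i ∉ S := fun h => hi' (Finset.mem_insert_of_mem h)
        rw [hL, Function.update_of_ne h1]
        exact heq i h2
    rw [hrec, hzero] at happ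
    linarith
  -- all j between 1 and k
  have Hdown : ∀ m : ℕ, m ≤ k - 1 → Stmt16Aux.HProp δ C (k - m) := by
    intro m
    induction m with
    | zero => intro _; simpa using Hk
    | succ p ih =>
      intro hp
      have h2 := ih (by omega)
      have h3 : k - (p+1) + 1 = k - p := by omega
      exact Hstep (k - (p+1)) (by omega) (by omega) (h3 ▸ h2)
  have H1 : Stmt16Aux.HProp δ C 1 := by
    have h := Hdown (k-1) le_rfl
    have he : k - (k-1) = 1 := by omega
    rwa [he] at h
  have H2 : Stmt16Aux.HProp δ C 2 := by
    have h := Hdown (k-2) (by omega)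
    have he : k - (k-2) = 2 := by omega
    rwa [he] at h
  -- single-coordinate monotonicity
  have mono1 : ∀ (i : Fin n) (z : Pt n), (∀ j, z j ∈ δ j) → ∀ a b : ℝ,
      a ∈ δ i → b ∈ δ i → a ≤ b →
      C (Function.update z i a) ≤ C (Function.update z i b) := by
    intro i z hz a b ha hb hab
    have hm1 : ∀ j, (Function.update z i a) j ∈ δ j := by
      intro j; by_cases h : j = i
      · subst h; simp [ha]
      · simp [Function.update_of_ne h, hz j]
    have hm2 : ∀ j, (Function.update z i b) j ∈ δ j := by
      intro j; by_cases h : j = i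
      · subst h; simp [hb]
      · simp [Function.update_of_ne h, hz j]
    have hle : ∀ j, (Function.update z i a) j ≤ (Function.update z i b) j := by
      intro j; by_cases h : j = i
      · subst h; simp [hab]
      · simp [Function.update_of_ne h]
    have heq : ∀ j, j ∉ ({i} : Finset (Fin n)) →
        (Function.update z i a) j = (Function.update z i b) j := by
      intro j hj
      have h : j ≠ i := by simpa using hj
      rw [Function.update_of_ne h, Function.update_of_ne h]
    have happ := H1 _ _ hm1 hm2 hle {i} (by simp) heq
    rw [Stmt16Aux.mdiff_singleton] at happ
    have hcalc : Function.update (Function.update z i a) i ((Function.update z i b) i)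
        = Function.update z i b := by
      rw [Function.update_self, Function.update_idem]
    rw [hcalc] at happ
    linarith
  -- raising coordinates to 1 increases single-coordinate increments
  have raise : ∀ (i : Fin n) (a b : ℝ), a ∈ δ i → b ∈ δ i → a ≤ b →
      ∀ z : Pt n, (∀ j, z j ∈ δ j) → ∀ U : Finset (Fin n), i ∉ U →
      C (Function.update z i b) - C (Function.update z i a)
        ≤ C (Function.update (Stmt16Aux.maskf z U) i b)
            - C (Function.update (Stmt16Aux.maskf z U) i a) := by
    intro i a b ha hb hab z hz U
    induction U using Finset.induction_on with
    | empty =>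
      intro _
      have hm : Stmt16Aux.maskf z ∅ = z := by funext j; simp [Stmt16Aux.maskf]
      rw [hm]
    | @insert t U htU ih =>
      intro hins
      have hit : i ≠ t := fun h => hins (h ▸ Finset.mem_insert_self t U)
      have hiU : i ∉ U := fun h => hins (Finset.mem_insert_of_mem h)
      refine le_trans (ih hiU) ?_
      set p : Pt n := Stmt16Aux.maskf z U with hp
      have hpm : ∀ j, p j ∈ δ j := by
        intro j
        by_cases h : j ∈ U
        · simp [hp, Stmt16Aux.maskf, h, hδ1 j]
        · simp [hp, Stmt16Aux.maskf, h, hz j]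
      have hpt : p t = z t := by simp [hp, Stmt16Aux.maskf, htU]
      have hmaskins : Stmt16Aux.maskf z (insert t U) = Function.update p t 1 := by
        funext j
        by_cases h : j = t
        · subst h; simp [Stmt16Aux.maskf, Function.update_self]
        · rw [Function.update_of_ne h]
          simp [Stmt16Aux.maskf, hp, h]
      set LO : Pt n := Function.update p i a with hLO
      set HI : Pt n := Function.update (Function.update p t 1) i b with hHI
      have hLOm : ∀ j, LO j ∈ δ j := by
        intro j; by_cases h : j = i
        · subst h; simp [hLO, ha]
        · simp [hLO, Function.update_of_ne h, hpm j]
      have hHIm : ∀ j, HI j ∈ δ j := by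
        intro j
        by_cases h : j = i
        · subst h; simp [hHI, hb]
        · rw [hHI, Function.update_of_ne h]
          by_cases h' : j = t
          · subst h'; simp [hδ1 j]
          · simp [Function.update_of_ne h', hpm j]
      have hLOHI : ∀ j, LO j ≤ HI j := by
        intro j
        by_cases h : j = i
        · subst h; simp [hLO, hHI, hab]
        · rw [hLO, Function.update_of_ne h, hHI, Function.update_of_ne h]
          by_cases h' : j = t
          · subst h'
            rw [Function.update_self]
            exact (hδI j (hpm j)).2
          · rw [Function.update_of_ne h']
      have hcard2 : (insert t ({i} : Finset (Fin n))).card = 2 := by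
        rw [Finset.card_insert_of_notMem (by simp [Ne.symm hit])]
        simp
      have heqoff : ∀ j, j ∉ insert t ({i} : Finset (Fin n)) → LO j = HI j := by
        intro j hj
        have h1 : j ≠ t := fun h => hj (h ▸ Finset.mem_insert_self t {i})
        have h2 : j ≠ i := fun h =>
          hj (Finset.mem_insert_of_mem (by simp [h]))
        rw [hLO, Function.update_of_ne h2, hHI, Function.update_of_ne h2,
          Function.update_of_ne h1]
      have happ := H2 LO HI hLOm hHIm hLOHI (insert t {i}) hcard2 heqoff
      have hrec := Stmt16Aux.mdiff_insert C LO HI ({i} : Finset (Fin n)) t (by simp [Ne.symm hit])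
      rw [Stmt16Aux.mdiff_singleton, Stmt16Aux.mdiff_singleton] at hrec
      have hHIt : HI t = 1 := by
        rw [hHI, Function.update_of_ne (Ne.symm hit), Function.update_self]
      have hHIi : HI i = b := by rw [hHI, Function.update_self]
      have e1 : Function.update LO t (HI t) = Function.update (Function.update p t 1) i a := by
        rw [hHIt, hLO, Function.update_comm hit]
      have e2 : Function.update (Function.update LO t (HI t)) i (HI i)
          = Function.update (Function.update p t 1) i b := by
        rw [e1, hHIi, Function.update_idem]
      have e3 : Function.update LO i (HI i) = Function.update p i b := by
        rw [hLO, hHIi, Function.update_idem]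
      rw [e2, e1, e3, hLO] at hrec
      rw [hrec] at happ
      rw [hmaskins]
      linarith
  -- coordinatewise Lipschitz bound
  have lipco : ∀ (i : Fin n) (z : Pt n), (∀ j, z j ∈ δ j) → ∀ a b : ℝ,
      a ∈ δ i → b ∈ δ i → a ≤ b →
      C (Function.update z i b) - C (Function.update z i a) ≤ b - a := by
    intro i z hz a b ha hb hab
    have hr := raise i a b ha hb hab z hz (Finset.univ.erase i) (Finset.notMem_erase i _)
    have hmb : Function.update (Stmt16Aux.maskf z (Finset.univ.erase i)) i b
        = Function.update (fun _ => (1:ℝ)) i b := by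
      funext j
      by_cases h : j = i
      · subst h; rw [Function.update_self, Function.update_self]
      · rw [Function.update_of_ne h, Function.update_of_ne h]
        simp [Stmt16Aux.maskf, h]
    have hma : Function.update (Stmt16Aux.maskf z (Finset.univ.erase i)) i a
        = Function.update (fun _ => (1:ℝ)) i a := by
      funext j
      by_cases h : j = i
      · subst h; rw [Function.update_self, Function.update_self]
      · rw [Function.update_of_ne h, Function.update_of_ne h]
        simp [Stmt16Aux.maskf, h]
    rw [hmb, hma, hCmarg i b hb, hCmarg i a ha] at hr
    exact hr
  -- single coordinate absolute bound
  have step1 : ∀ (t : Fin n) (w : Pt n), (∀ j, w j ∈ δ j) → ∀ a b : ℝ,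
      a ∈ δ t → b ∈ δ t →
      |C (Function.update w t a) - C (Function.update w t b)| ≤ |a - b| := by
    intro t w hw a b ha hb
    rcases le_total a b with h | h
    · have h1 := mono1 t w hw a b ha hb h
      have h2 := lipco t w hw a b ha hb h
      have hab : |a - b| = b - a := by
        rw [abs_sub_comm]; exact abs_of_nonneg (by linarith)
      rw [hab]
      exact abs_le.2 ⟨by linarith, by linarith⟩
    · have h1 := mono1 t w hw b a hb ha h
      have h2 := lipco t w hw b a hb ha h
      have hab : |a - b| = a - b := abs_of_nonneg (by linarith)
      rw [hab]
      exact abs_le.2 ⟨by linarith, by linarith⟩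
  -- Lipschitz estimate on the mesh
  have lipD : ∀ d e : Pt n, (∀ i, d i ∈ δ i) → (∀ i, e i ∈ δ i) →
      |C d - C e| ≤ n * dist d e := by
    intro d e hd he
    have key : ∀ U : Finset (Fin n),
        |C (fun j => if j ∈ U then d j else e j) - C e| ≤ ∑ j ∈ U, |d j - e j| := by
      intro U
      induction U using Finset.induction_on with
      | empty => simp
      | @insert t U htU ih =>
        have hyU : ∀ j, (fun j => if j ∈ U then d j else e j) j ∈ δ j := by
          intro j; by_cases h : j ∈ U <;> simp [h, hd j, he j]
        have e1 : (fun j => if j ∈ insert t U then d j else e j)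
            = Function.update (fun j => if j ∈ U then d j else e j) t (d t) := by
          funext j
          by_cases h : j = t
          · subst h; simp
          · rw [Function.update_of_ne h]
            simp [Finset.mem_insert, h]
        have e2 : (fun j => if j ∈ U then d j else e j)
            = Function.update (fun j => if j ∈ U then d j else e j) t (e t) := by
          funext j
          by_cases h : j = t
          · subst h; simp [htU]
          · rw [Function.update_of_ne h]
        have h3 := step1 t (fun j => if j ∈ U then d j else e j) hyU (d t) (e t) (hd t) (he t)
        rw [← e1, ← e2] at h3
        calc |C (fun j => if j ∈ insert t U then d j else e j) - C e|
            ≤ |C (fun j => if j ∈ insert t U then d j else e j)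
                - C (fun j => if j ∈ U then d j else e j)|
              + |C (fun j => if j ∈ U then d j else e j) - C e| := abs_sub_le _ _ _
          _ ≤ |d t - e t| + ∑ j ∈ U, |d j - e j| := by
              exact add_le_add h3 ih
          _ = ∑ j ∈ insert t U, |d j - e j| := by rw [Finset.sum_insert htU]
    have h4 := key Finset.univ
    have e5 : (fun j => if j ∈ Finset.univ then d j else e j) = d := by
      funext j; simp
    rw [e5] at h4
    refine le_trans h4 ?_
    have h6 : ∀ j ∈ Finset.univ, |d j - e j| ≤ dist d e := by
      intro j _
      rw [← Real.dist_eq]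
      exact dist_le_pi_dist d e j
    exact le_trans (Finset.sum_le_card_nsmul _ _ (dist d e) h6)
      (le_of_eq (by rw [Finset.card_univ, Fintype.card_fin, nsmul_eq_mul]))
  -- Lipschitz extension
  have hlipOn : LipschitzOnWith (n : NNReal) C D := by
    rw [lipschitzOnWith_iff_dist_le_mul]
    intro x hx y hy
    have hx' : ∀ i, x i ∈ δ i := by rw [hDeq] at hx; exact hx
    have hy' : ∀ i, y i ∈ δ i := by rw [hDeq] at hy; exact hy
    have h := lipD x y hx' hy'
    rw [Real.dist_eq, NNReal.coe_natCast]
    exact h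
  obtain ⟨C', hC'lip, hC'eq⟩ := hlipOn.extend_real
  have hC'd : ∀ u v : Pt n, |C' u - C' v| ≤ n * dist u v := by
    intro u v
    have h := hC'lip.dist_le_mul u v
    rw [Real.dist_eq, NNReal.coe_natCast] at h
    exact h
  -- approximation lemmas
  have near : ∀ (i : Fin n) (x : ℝ), x ∈ Set.Icc (0:ℝ) 1 → ∀ ε : ℝ, 0 < ε →
      ∃ t ∈ δ i, |t - x| ≤ ε := by
    intro i x hx ε hε
    have hcl : x ∈ closure (δ i) := hδdense i hx
    rw [Metric.mem_closure_iff] at hcl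
    obtain ⟨t, ht, hdist⟩ := hcl ε hε
    refine ⟨t, ht, ?_⟩
    rw [Real.dist_eq, abs_sub_comm] at hdist
    linarith
  have above : ∀ (i : Fin n) (x : ℝ), x ∈ Set.Icc (0:ℝ) 1 → ∀ ε : ℝ, 0 < ε →
      ∃ t ∈ δ i, x ≤ t ∧ t - x ≤ ε := by
    intro i x hx ε hε
    by_cases hx1 : x = 1
    · exact ⟨1, hδ1 i, by rw [hx1], by rw [hx1]; linarith⟩
    · have hxlt : x < 1 := lt_of_le_of_ne hx.2 hx1
      set c : ℝ := min (x + ε) 1 with hc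
      have hxc : x < c := lt_min (by linarith) hxlt
      set μ : ℝ := (x + c)/2 with hμ
      have hμI : μ ∈ Set.Icc (0:ℝ) 1 := by
        constructor
        · have := hx.1; rw [hμ]; linarith
        · have : c ≤ 1 := min_le_right _ _
          rw [hμ]; linarith
      have hρ : 0 < (c - x)/2 := by linarith
      have hcl : μ ∈ closure (δ i) := hδdense i hμI
      rw [Metric.mem_closure_iff] at hcl
      obtain ⟨t, ht, hdist⟩ := hcl ((c - x)/2) hρ
      rw [Real.dist_eq] at hdist
      have h1 := abs_lt.1 hdist
      have hc1 : c ≤ x + ε := min_le_left _ _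
      refine ⟨t, ht, ?_, ?_⟩
      · rw [hμ] at h1; have := h1.1; linarith [h1.1]
      · rw [hμ] at h1; linarith [h1.2]
  have below : ∀ (i : Fin n) (x : ℝ), x ∈ Set.Icc (0:ℝ) 1 → ∀ ε : ℝ, 0 < ε →
      ∃ t ∈ δ i, t ≤ x ∧ x - t ≤ ε := by
    intro i x hx ε hε
    by_cases hx0 : x = 0
    · exact ⟨0, hδ0 i, by rw [hx0], by rw [hx0]; linarith⟩
    · have hxgt : 0 < x := lt_of_le_of_ne hx.1 (Ne.symm hx0)
      set c : ℝ := max (x - ε) 0 with hc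
      have hxc : c < x := max_lt (by linarith) hxgt
      set μ : ℝ := (c + x)/2 with hμ
      have hμI : μ ∈ Set.Icc (0:ℝ) 1 := by
        constructor
        · have : (0:ℝ) ≤ c := le_max_right _ _
          rw [hμ]; linarith
        · have := hx.2; rw [hμ]; linarith
      have hρ : 0 < (x - c)/2 := by linarith
      have hcl : μ ∈ closure (δ i) := hδdense i hμI
      rw [Metric.mem_closure_iff] at hcl
      obtain ⟨t, ht, hdist⟩ := hcl ((x - c)/2) hρ
      rw [Real.dist_eq] at hdist
      have h1 := abs_lt.1 hdist
      have hc1 : x - ε ≤ c := le_max_left _ _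
      refine ⟨t, ht, ?_, ?_⟩
      · rw [hμ] at h1; linarith [h1.2]
      · rw [hμ] at h1; linarith [h1.1]
  -- sandwich, lower bound
  have hAle : ∀ x : Pt n, inCube x → A x ≤ C' x := by
    intro x hx
    have key : ∀ ε : ℝ, 0 < ε → A x ≤ C' x + n * ε := by
      intro ε hε
      have hch : ∀ i, ∃ t ∈ δ i, x i ≤ t ∧ t - x i ≤ ε := fun i => above i (x i) (hx i) ε hε
      choose d hd1 hd2 hd3 using hch
      have hdD : d ∈ D := hmemD d hd1
      have h1 : A x ≤ A d := hA.2.1 x d hx (hcube d hd1) hd2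
      have h2 : A d ≤ C d := (hCsand d hdD).1
      have h3 : C d = C' d := hC'eq hdD
      have h4 : |C' d - C' x| ≤ n * ε := by
        refine le_trans (hC'd d x) ?_
        have hdx : dist d x ≤ ε := by
          rw [dist_pi_le_iff hε.le]
          intro i
          rw [Real.dist_eq, abs_of_nonneg (sub_nonneg.2 (hd2 i))]
          linarith [hd3 i]
        exact mul_le_mul_of_nonneg_left hdx (by positivity)
      have h5 := (abs_le.1 h4).2
      linarith
    by_contra hcon
    push_neg at hcon
    have hεp : 0 < (A x - C' x)/(2*n) := by
      apply div_pos (by linarith) (by linarith)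
    have hkey := key _ hεp
    have hfield : (n:ℝ) * ((A x - C' x)/(2*n)) = (A x - C' x)/2 := by
      field_simp
    rw [hfield] at hkey
    linarith
  -- sandwich, upper bound
  have hBge : ∀ x : Pt n, inCube x → C' x ≤ B x := by
    intro x hx
    have key : ∀ ε : ℝ, 0 < ε → C' x ≤ B x + n * ε := by
      intro ε hε
      have hch : ∀ i, ∃ t ∈ δ i, t ≤ x i ∧ x i - t ≤ ε := fun i => below i (x i) (hx i) ε hε
      choose d hd1 hd2 hd3 using hch
      have hdD : d ∈ D := hmemD d hd1
      have h1 : B d ≤ B x := hB.2.1 d x (hcube d hd1) hx hd2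
      have h2 : C d ≤ B d := (hCsand d hdD).2
      have h3 : C d = C' d := hC'eq hdD
      have h4 : |C' x - C' d| ≤ n * ε := by
        refine le_trans (hC'd x d) ?_
        have hdx : dist x d ≤ ε := by
          rw [dist_pi_le_iff hε.le]
          intro i
          rw [Real.dist_eq, abs_of_nonneg (sub_nonneg.2 (hd2 i))]
          linarith [hd3 i]
        exact mul_le_mul_of_nonneg_left hdx (by positivity)
      have h5 := (abs_le.1 h4).2
      linarith
    by_contra hcon
    push_neg at hcon
    have hεp : 0 < (C' x - B x)/(2*n) := by
      apply div_pos (by linarith) (by linarith)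
    have hkey := key _ hεp
    have hfield : (n:ℝ) * ((C' x - B x)/(2*n)) = (C' x - B x)/2 := by
      field_simp
    rw [hfield] at hkey
    linarith
  -- k-increasingness of C'
  have hKinc : KIncreasingOn k (cubeSet n) C' := by
    intro R hR _
    obtain ⟨hlo, hhi, hle, hcard⟩ := hR
    set S : Finset (Fin n) := Finset.univ.filter (fun i => R.lo i < R.hi i) with hSdef
    have hSiff : ∀ i, i ∈ S ↔ R.lo i < R.hi i := by
      intro i; simp [hSdef]
    rw [Stmt16Aux.vvol_eq_mdiff k C' R hle S hSiff hcard]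
    have key : ∀ ε : ℝ, 0 < ε →
        0 ≤ Stmt16Aux.mdiff C' R.lo R.hi S + 2^n * (n * ε) := by
      intro ε hε
      have hch : ∀ i : Fin n, ∃ a b : ℝ, a ∈ δ i ∧ b ∈ δ i ∧ a ≤ b ∧
          (¬ R.lo i < R.hi i → a = b) ∧ |a - R.lo i| ≤ ε ∧ |b - R.hi i| ≤ ε := by
        intro i
        by_cases hstrict : R.lo i < R.hi i
        · have hrpos : 0 < min ε ((R.hi i - R.lo i)/2) := lt_min hε (by linarith)
          obtain ⟨a, ha, haa⟩ := near i (R.lo i) (hlo i) _ hrpos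
          obtain ⟨b, hb, hbb⟩ := near i (R.hi i) (hhi i) _ hrpos
          have h1 := abs_le.1 haa
          have h2 := abs_le.1 hbb
          have hm := min_le_right ε ((R.hi i - R.lo i)/2)
          have hm' := min_le_left ε ((R.hi i - R.lo i)/2)
          refine ⟨a, b, ha, hb, by linarith [h1.2, h2.1], fun h => absurd hstrict h, ?_, ?_⟩
          · exact le_trans haa hm'
          · exact le_trans hbb hm'
        · have heqi : R.lo i = R.hi i := le_antisymm (hle i) (not_lt.1 hstrict)
          obtain ⟨a, ha, haa⟩ := near i (R.lo i) (hlo i) ε hε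
          exact ⟨a, a, ha, ha, le_rfl, fun _ => rfl, haa, by rw [← heqi]; exact haa⟩
      choose lo' hi' hm1 hm2 hab hdeg hda hdb using hch
      have heqoff : ∀ i, i ∉ S → lo' i = hi' i := by
        intro i hi'
        exact hdeg i (fun h => hi' ((hSiff i).2 h))
      have h0 : 0 ≤ Stmt16Aux.mdiff C lo' hi' S := Hk lo' hi' hm1 hm2 hab S hcard heqoff
      have hCd : Stmt16Aux.mdiff C lo' hi' S = Stmt16Aux.mdiff C' lo' hi' S := by
        unfold Stmt16Aux.mdiff
        apply Finset.sum_congr rfl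
        intro T _
        have hmem : ∀ j, (Stmt16Aux.corner lo' hi' T) j ∈ δ j := by
          intro j
          by_cases h : j ∈ T
          · simp [Stmt16Aux.corner, h, hm2 j]
          · simp [Stmt16Aux.corner, h, hm1 j]
        rw [hC'eq (hmemD _ hmem)]
      have hbound : |Stmt16Aux.mdiff C' R.lo R.hi S - Stmt16Aux.mdiff C' lo' hi' S|
          ≤ 2^n * (n * ε) := by
        unfold Stmt16Aux.mdiff
        rw [← Finset.sum_sub_distrib]
        refine le_trans (Finset.abs_sum_le_sum_abs _ _) ?_
        have hterm : ∀ T ∈ S.powerset,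
            |(-1:ℝ)^(S.card - T.card) * C' (Stmt16Aux.corner R.lo R.hi T)
              - (-1:ℝ)^(S.card - T.card) * C' (Stmt16Aux.corner lo' hi' T)| ≤ n * ε := by
          intro T _
          rw [← mul_sub, abs_mul, abs_pow, abs_neg, abs_one, one_pow, one_mul]
          refine le_trans (hC'd _ _) ?_
          have hdd : dist (Stmt16Aux.corner R.lo R.hi T) (Stmt16Aux.corner lo' hi' T) ≤ ε := by
            rw [dist_pi_le_iff hε.le]
            intro i
            by_cases h : i ∈ T
            · simp only [Stmt16Aux.corner, h, if_true]
              rw [Real.dist_eq, abs_sub_comm]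
              exact hdb i
            · simp only [Stmt16Aux.corner, h, if_false]
              rw [Real.dist_eq, abs_sub_comm]
              exact hda i
          exact mul_le_mul_of_nonneg_left hdd (by positivity)
        refine le_trans (Finset.sum_le_card_nsmul _ _ (n*ε) hterm) ?_
        rw [nsmul_eq_mul]
        have hcardp : (S.powerset.card : ℝ) ≤ 2^n := by
          rw [Finset.card_powerset]
          have hSn : S.card ≤ n := by
            calc S.card ≤ Finset.univ.card := Finset.card_le_univ S
              _ = n := by simp
          calc ((2^S.card : ℕ) : ℝ) = (2:ℝ)^S.card := by push_cast; ring
            _ ≤ (2:ℝ)^n := by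
                exact pow_le_pow_right₀ (by norm_num) hSn
        have hnε : 0 ≤ (n:ℝ) * ε := by positivity
        exact mul_le_mul_of_nonneg_right hcardp hnε
      have h5 := (abs_le.1 hbound).1
      linarith
    by_contra hcon
    push_neg at hcon
    set M : ℝ := Stmt16Aux.mdiff C' R.lo R.hi S with hM
    have hεp : 0 < -M / (2 * (2^n * n)) := by
      apply div_pos (by linarith) (by positivity)
    have hkey := key _ hεp
    have hfield : (2:ℝ)^n * ((n:ℝ) * (-M / (2 * (2^n * n)))) = -M/2 := by
      have h2n : (2:ℝ)^n ≠ 0 := by positivity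
      have hnn : (n:ℝ) ≠ 0 := by linarith
      field_simp
    rw [hfield] at hkey
    linarith
  exact ⟨C', hKinc, fun d hd => (hC'eq hd).symm, fun x hx => ⟨hAle x hx, hBge x hx⟩⟩
end
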